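/- arXiv:0801.2310 — 5 statements merged into one kernel-verified Lean document; each statement's English description precedes it below -/
import Mathlib

section
/- (Variant of the Hardy–Littlewood–Sobolev inequality) Let d ≥ 3 and m = 2(d−1)/d. There exists a finite constant C > 0 such that for every measurable h : ℝ^d → ℝ with h ≥ 0 a.e. and h ∈ L¹(ℝ^d) ∩ L^m(ℝ^d), one has 𝒲(h) = ∬_{ℝ^d×ℝ^d} h(x)h(y)|x−y|^(−(d−2)) dx dy ≤ C ‖h‖₁^(2/d) ‖h‖_m^m. In particular the supremum C_* of 𝒲(h)/(‖h‖₁^(2/d) ‖h‖_m^m) over all such nonzero h is finite. -/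
open MeasureTheory Real Metric Set
open scoped ENNReal NNReal

noncomputable section

abbrev E (d : ℕ) := EuclideanSpace ℝ (Fin d)

def mexp (d : ℕ) : ℝ := 2 * ((d : ℝ) - 1) / d

def sigmaD (d : ℕ) : ℝ := 2 * Real.pi ^ ((d : ℝ) / 2) / Real.Gamma ((d : ℝ) / 2)

def cD (d : ℕ) : ℝ := 1 / (((d : ℝ) - 2) * sigmaD d)

def Wfun (d : ℕ) (h : E d → ℝ) : ℝ :=
  ∫ x : E d, ∫ y : E d, h x * h y * ‖x - y‖ ^ (-((d : ℝ) - 2))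

def nrm (d : ℕ) (p : ℝ) (h : E d → ℝ) : ℝ :=
  (eLpNorm h (ENNReal.ofReal p) volume).toReal

def InL1Lm (d : ℕ) (h : E d → ℝ) : Prop :=
  MemLp h 1 volume ∧ MemLp h (ENNReal.ofReal (mexp d)) volume ∧ 0 ≤ᵐ[volume] h

def Ffun (d : ℕ) (h : E d → ℝ) : ℝ :=
  (1 / (mexp d - 1)) * (∫ x : E d, h x ^ mexp d) - (cD d / 2) * Wfun d h

def Cstar (d : ℕ) : ℝ :=
  sSup { r : ℝ | ∃ h : E d → ℝ, InL1Lm d h ∧ ¬ (h =ᵐ[volume] 0) ∧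
    r = Wfun d h / (nrm d 1 h ^ (2 / (d : ℝ)) * nrm d (mexp d) h ^ mexp d) }

def Mc (d : ℕ) : ℝ := (2 / ((mexp d - 1) * Cstar d * cD d)) ^ ((d : ℝ) / 2)

def YM (d : ℕ) (M : ℝ) : Set (E d → ℝ) := { h | InL1Lm d h ∧ nrm d 1 h = M }

def M2 (d : ℕ) (h : E d → ℝ) : ℝ := ∫ x : E d, ‖x‖ ^ 2 * h x

def Gfun (d : ℕ) (h : E d → ℝ) : ℝ := Ffun d h + M2 d h / 2

def ZM (d : ℕ) (M : ℝ) : Set (E d → ℝ) :=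
  { h | h ∈ YM d M ∧ Integrable (fun x : E d => ‖x‖ ^ 2 * h x) volume }

def lap (d : ℕ) (f : E d → ℝ) (x : E d) : ℝ :=
  ∑ i : Fin d, fderiv ℝ (fun y => fderiv ℝ f y (EuclideanSpace.single i 1)) x (EuclideanSpace.single i 1)

lemma vhls_integral_le {α : Type*} [MeasurableSpace α] {μ : Measure α}
    {f : α → ℝ} (hf : 0 ≤ᵐ[μ] f) :
    ∫ a, f a ∂μ ≤ (∫⁻ a, ENNReal.ofReal (f a) ∂μ).toReal := by
  by_cases hi : Integrable f μ
  · exact le_of_eq (integral_eq_lintegral_of_nonneg_ae hf hi.1)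
  · rw [integral_undef hi]; exact ENNReal.toReal_nonneg

lemma vhls_opt {s t X Y : ℝ} (hs : 0 < s) (ht : 0 < t) (hX : 0 < X) (hY : 0 < Y) :
    ∃ R : ℝ, 0 < R ∧
      X * R ^ s + Y * R ^ (-t) ≤ 2 * (X ^ (t / (s + t)) * Y ^ (s / (s + t))) := by
  have hst : 0 < s + t := by linarith
  have hYX : 0 < Y / X := div_pos hY hX
  refine ⟨(Y / X) ^ (1 / (s + t)), Real.rpow_pos_of_pos hYX _, ?_⟩
  have h1 : ((Y / X) ^ (1 / (s + t))) ^ s = (Y / X) ^ (s / (s + t)) := by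
    rw [← Real.rpow_mul hYX.le]; congr 1; field_simp
  have h2 : ((Y / X) ^ (1 / (s + t))) ^ (-t) = (Y / X) ^ (-(t / (s + t))) := by
    rw [← Real.rpow_mul hYX.le]; congr 1; field_simp
  have hXs : X ^ (t / (s + t)) = X / X ^ (s / (s + t)) := by
    rw [show t / (s + t) = 1 - s / (s + t) by field_simp; ring, Real.rpow_sub hX, Real.rpow_one]
  have hYs : Y ^ (s / (s + t)) = Y / Y ^ (t / (s + t)) := by
    rw [show s / (s + t) = 1 - t / (s + t) by field_simp; ring, Real.rpow_sub hY, Real.rpow_one]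
  have e1 : X * ((Y / X) ^ (1 / (s + t))) ^ s = X ^ (t / (s + t)) * Y ^ (s / (s + t)) := by
    rw [h1, Real.div_rpow hY.le hX.le, hXs]
    have hXσ : 0 < X ^ (s / (s + t)) := Real.rpow_pos_of_pos hX _
    field_simp
  have e2 : Y * ((Y / X) ^ (1 / (s + t))) ^ (-t) = X ^ (t / (s + t)) * Y ^ (s / (s + t)) := by
    rw [h2, Real.rpow_neg hYX.le, Real.div_rpow hY.le hX.le, hYs]
    have hYτ : 0 < Y ^ (t / (s + t)) := Real.rpow_pos_of_pos hY _
    have hXτ : 0 < X ^ (t / (s + t)) := Real.rpow_pos_of_pos hX _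
    field_simp
  rw [e1, e2]; linarith

lemma vhls_ball_bound (d : ℕ) (hd : 3 ≤ d) {R : ℝ} (hR : 0 < R) :
    ∫⁻ z : E d in ball (0 : E d) R, ((‖z‖₊ : ℝ≥0∞)) ^ (-((d : ℝ) - 1)) ≤
      (ENNReal.ofReal ((2 : ℝ) ^ (d + 2)) * volume (ball (0 : E d) 1)) * ENNReal.ofReal R := by
  classical
  haveI : NeZero d := ⟨by omega⟩
  have hdR : (3 : ℝ) ≤ (d : ℝ) := by exact_mod_cast hd
  set s : ℝ := (d : ℝ) - 1 with hs
  have hs0 : 0 ≤ s := by rw [hs]; linarith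
  set r : ℕ → ℝ := fun n => R * (1 / 2 : ℝ) ^ n with hr
  have hrpos : ∀ n, 0 < r n := fun n => by rw [hr]; positivity
  set A : ℕ → Set (E d) := fun n => ball (0 : E d) (r n) \ ball (0 : E d) (r (n + 1)) with hA
  have cover : ball (0 : E d) R ⊆ ({0} : Set (E d)) ∪ ⋃ n, A n := by
    intro z hz
    rcases eq_or_ne z 0 with rfl | hz0
    · exact Or.inl rfl
    · have hzpos : 0 < ‖z‖ := norm_pos_iff.mpr hz0
      have hzR : ‖z‖ < R := mem_ball_zero_iff.mp hz
      have hex : ∃ n, r (n + 1) ≤ ‖z‖ := by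
        obtain ⟨n, hn⟩ := exists_pow_lt_of_lt_one (div_pos hzpos hR) (by norm_num : (1 / 2 : ℝ) < 1)
        refine ⟨n, ?_⟩
        have h1 : (1 / 2 : ℝ) ^ (n + 1) ≤ (1 / 2 : ℝ) ^ n :=
          pow_le_pow_of_le_one (by norm_num) (by norm_num) (by omega)
        have h2 : R * (1 / 2 : ℝ) ^ n ≤ ‖z‖ := by
          rw [mul_comm]
          exact ((lt_div_iff₀ hR).mp hn).le
        calc r (n + 1) = R * (1 / 2 : ℝ) ^ (n + 1) := rfl
          _ ≤ R * (1 / 2 : ℝ) ^ n := by gcongr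
          _ ≤ ‖z‖ := h2
      refine Or.inr (mem_iUnion.mpr ⟨Nat.find hex, ?_, ?_⟩)
      · rcases Nat.eq_zero_or_pos (Nat.find hex) with h0 | hposn
        · rw [h0]
          exact mem_ball_zero_iff.mpr (by simpa [hr] using hzR)
        · obtain ⟨k, hk⟩ := Nat.exists_eq_succ_of_ne_zero hposn.ne'
          have hmin := Nat.find_min hex (show k < Nat.find hex by omega)
          rw [hk]
          exact mem_ball_zero_iff.mpr (lt_of_not_ge hmin)
      · intro hmem
        exact absurd (Nat.find_spec hex) (not_le.mpr (mem_ball_zero_iff.mp hmem))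
  have key : ∀ n : ℕ, (r (n + 1)) ^ (-s) * (r n) ^ d ≤ (2 : ℝ) ^ (d + 1) * R * (1 / 2 : ℝ) ^ n := by
    intro n
    have hrn : 0 < r n := hrpos n
    have hhalf : r (n + 1) = r n / 2 := by
      simp only [hr, pow_succ]; ring
    have e1 : (r (n + 1)) ^ (-s) * (r n) ^ d = 2 ^ s * r n := by
      rw [hhalf, Real.rpow_neg (by positivity), Real.div_rpow hrn.le (by norm_num : (0:ℝ) ≤ 2),
        inv_div, ← Real.rpow_natCast (r n) d,
        show (d : ℝ) = s + 1 by rw [hs]; ring, Real.rpow_add hrn, Real.rpow_one]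
      have hrs : (r n) ^ s ≠ 0 := (Real.rpow_pos_of_pos hrn s).ne'
      field_simp
    have h2s : (2 : ℝ) ^ s ≤ 2 ^ (d + 1) := by
      calc (2 : ℝ) ^ s ≤ 2 ^ ((d + 1 : ℕ) : ℝ) :=
            Real.rpow_le_rpow_of_exponent_le one_le_two (by push_cast; rw [hs]; linarith)
        _ = 2 ^ (d + 1) := Real.rpow_natCast 2 (d + 1)
    calc (r (n + 1)) ^ (-s) * (r n) ^ d = 2 ^ s * (R * (1 / 2 : ℝ) ^ n) := by rw [e1]
      _ ≤ 2 ^ (d + 1) * (R * (1 / 2 : ℝ) ^ n) := by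
          have : (0:ℝ) ≤ R * (1 / 2 : ℝ) ^ n := by positivity
          gcongr
      _ = 2 ^ (d + 1) * R * (1 / 2 : ℝ) ^ n := by ring
  have hsingle : volume ({0} : Set (E d)) = 0 := by
    have h1 : ({0} : Set (E d)) = closedBall (0 : E d) 0 := by simp
    rw [h1, Measure.addHaar_closedBall (volume : Measure (E d)) (0 : E d) le_rfl,
      finrank_euclideanSpace_fin, zero_pow (by omega : d ≠ 0)]
    simp
  calc ∫⁻ z in ball (0 : E d) R, ((‖z‖₊ : ℝ≥0∞)) ^ (-s)
      ≤ ∫⁻ z in (({0} : Set (E d)) ∪ ⋃ n, A n), ((‖z‖₊ : ℝ≥0∞)) ^ (-s) :=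
        lintegral_mono_set cover
    _ ≤ (∫⁻ z in ({0} : Set (E d)), ((‖z‖₊ : ℝ≥0∞)) ^ (-s)) +
        ∫⁻ z in ⋃ n, A n, ((‖z‖₊ : ℝ≥0∞)) ^ (-s) := lintegral_union_le _ _ _
    _ ≤ 0 + ∑' n, ∫⁻ z in A n, ((‖z‖₊ : ℝ≥0∞)) ^ (-s) := by
        gcongr
        · exact le_of_eq (setLIntegral_measure_zero _ _ hsingle)
        · exact lintegral_iUnion_le _ _
    _ = ∑' n, ∫⁻ z in A n, ((‖z‖₊ : ℝ≥0∞)) ^ (-s) := by rw [zero_add]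
    _ ≤ ∑' n, (ENNReal.ofReal ((2:ℝ) ^ (d + 1) * R) * volume (ball (0 : E d) 1)) *
          (ENNReal.ofReal (1 / 2 : ℝ)) ^ n := by
        apply ENNReal.tsum_le_tsum
        intro n
        calc ∫⁻ z in A n, ((‖z‖₊ : ℝ≥0∞)) ^ (-s)
            ≤ ∫⁻ _ in A n, ENNReal.ofReal ((r (n + 1)) ^ (-s)) := by
              apply setLIntegral_mono measurable_const
              intro z hz
              have hlow : r (n + 1) ≤ ‖z‖ :=
                le_of_not_gt (fun hcon => hz.2 (mem_ball_zero_iff.mpr hcon))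
              have h1 : ENNReal.ofReal (r (n + 1)) ≤ (‖z‖₊ : ℝ≥0∞) := by
                rw [← enorm_eq_nnnorm, ← ofReal_norm]
                exact ENNReal.ofReal_le_ofReal hlow
              calc ((‖z‖₊ : ℝ≥0∞)) ^ (-s) = (((‖z‖₊ : ℝ≥0∞)) ^ s)⁻¹ := ENNReal.rpow_neg _ _
                _ ≤ (ENNReal.ofReal (r (n + 1)) ^ s)⁻¹ :=
                    ENNReal.inv_le_inv.mpr (ENNReal.rpow_le_rpow h1 hs0)
                _ = ENNReal.ofReal (r (n + 1)) ^ (-s) := (ENNReal.rpow_neg _ _).symm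
                _ = ENNReal.ofReal ((r (n + 1)) ^ (-s)) := ENNReal.ofReal_rpow_of_pos (hrpos _)
          _ = ENNReal.ofReal ((r (n + 1)) ^ (-s)) * volume (A n) := setLIntegral_const _ _
          _ ≤ ENNReal.ofReal ((r (n + 1)) ^ (-s)) * volume (ball (0 : E d) (r n)) := by
              gcongr
              simp only [hA]
              exact diff_subset
          _ = ENNReal.ofReal ((r (n + 1)) ^ (-s)) *
                (ENNReal.ofReal ((r n) ^ d) * volume (ball (0 : E d) 1)) := by
              rw [Measure.addHaar_ball _ _ (hrpos n).le, finrank_euclideanSpace_fin]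
          _ = ENNReal.ofReal ((r (n + 1)) ^ (-s) * (r n) ^ d) * volume (ball (0 : E d) 1) := by
              rw [ENNReal.ofReal_mul (by positivity), mul_assoc]
          _ ≤ ENNReal.ofReal ((2:ℝ) ^ (d + 1) * R * (1 / 2 : ℝ) ^ n) * volume (ball (0 : E d) 1) := by
              exact mul_le_mul_left (ENNReal.ofReal_le_ofReal (key n)) _
          _ = (ENNReal.ofReal ((2:ℝ) ^ (d + 1) * R) * volume (ball (0 : E d) 1)) *
                (ENNReal.ofReal (1 / 2 : ℝ)) ^ n := by
              rw [ENNReal.ofReal_mul (by positivity), ENNReal.ofReal_pow (by norm_num)]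
              ring
    _ = (ENNReal.ofReal ((2:ℝ) ^ (d + 1) * R) * volume (ball (0 : E d) 1)) *
          ∑' n, (ENNReal.ofReal (1 / 2 : ℝ)) ^ n := ENNReal.tsum_mul_left
    _ ≤ (ENNReal.ofReal ((2 : ℝ) ^ (d + 2)) * volume (ball (0 : E d) 1)) * ENNReal.ofReal R := by
        have hgeo : ∑' n : ℕ, (ENNReal.ofReal (1 / 2 : ℝ)) ^ n = 2 := by
          have : ENNReal.ofReal (1 / 2 : ℝ) = 2⁻¹ := by
            rw [ENNReal.ofReal_div_of_pos (by norm_num)]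
            norm_num
          rw [this, ENNReal.tsum_geometric, ENNReal.one_sub_inv_two, inv_inv]
        rw [hgeo]
        have h1 : ENNReal.ofReal ((2:ℝ) ^ (d + 1) * R) =
            ENNReal.ofReal ((2:ℝ) ^ (d + 1)) * ENNReal.ofReal R := by
          rw [ENNReal.ofReal_mul (by positivity)]
        have h2 : ((2:ℝ≥0∞)) * ENNReal.ofReal ((2:ℝ) ^ (d + 1)) = ENNReal.ofReal ((2:ℝ) ^ (d + 2)) := by
          rw [show ((2:ℝ≥0∞)) = ENNReal.ofReal (2:ℝ) by simp, ← ENNReal.ofReal_mul (by norm_num)]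
          congr 1
          ring
        apply le_of_eq
        rw [h1, ← h2]
        ring


set_option maxHeartbeats 2000000 in
/-- Variant of the Hardy–Littlewood–Sobolev inequality:
`𝒲(h) ≤ C ‖h‖₁^(2/d) ‖h‖ₘ^m` for all nonnegative `h ∈ L¹ ∩ Lᵐ`; in particular the
supremum of the corresponding ratios is finite. -/
theorem vhls_inequality (d : ℕ) (hd : 3 ≤ d) :
    ∃ C : ℝ, 0 < C ∧
      (∀ h : E d → ℝ, InL1Lm d h →
        Wfun d h ≤ C * nrm d 1 h ^ (2 / (d : ℝ)) * nrm d (mexp d) h ^ mexp d) ∧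
      BddAbove { r : ℝ | ∃ h : E d → ℝ, InL1Lm d h ∧ ¬ (h =ᵐ[volume] 0) ∧
        r = Wfun d h / (nrm d 1 h ^ (2 / (d : ℝ)) * nrm d (mexp d) h ^ mexp d) } := by
  classical
  haveI : NeZero d := ⟨by omega⟩
  have hdR : (3 : ℝ) ≤ (d : ℝ) := by exact_mod_cast hd
  have hd0 : (d : ℝ) ≠ 0 := by linarith
  have hd1 : (d : ℝ) - 1 ≠ 0 := by linarith
  have hd2 : (d : ℝ) - 2 ≠ 0 := by linarith
  have hm : mexp d = 2 * ((d : ℝ) - 1) / (d : ℝ) := rfl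
  have hm0 : 0 < mexp d := by
    rw [hm]; apply div_pos (by linarith) (by linarith)
  have hmne0 : (ENNReal.ofReal (mexp d)) ≠ 0 := by
    simp only [ne_eq, ENNReal.ofReal_eq_zero, not_le]; exact hm0
  set CB : ℝ≥0∞ := ENNReal.ofReal ((2 : ℝ) ^ (d + 2)) * volume (ball (0 : E d) 1) with hCB
  have hCB0 : CB ≠ 0 := by
    apply mul_ne_zero
    · simp only [ne_eq, ENNReal.ofReal_eq_zero, not_le]; positivity
    · exact (measure_ball_pos _ _ one_pos).ne'
  have hCBtop : CB ≠ ∞ := ENNReal.mul_ne_top ENNReal.ofReal_ne_top measure_ball_lt_top.ne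
  have hCBr : 0 < CB.toReal := ENNReal.toReal_pos hCB0 hCBtop
  set q : ℝ := ((d : ℝ) - 1) / ((d : ℝ) - 2) with hq
  have hq0 : 0 < q := by rw [hq]; apply div_pos (by linarith) (by linarith)
  set C : ℝ := 2 * CB.toReal ^ (((d : ℝ) - 2) / (d : ℝ)) with hC
  have hCpos : 0 < C := by
    rw [hC]
    have := Real.rpow_pos_of_pos hCBr (((d : ℝ) - 2) / (d : ℝ))
    linarith
  have main : ∀ h : E d → ℝ, InL1Lm d h →
      Wfun d h ≤ C * nrm d 1 h ^ (2 / (d : ℝ)) * nrm d (mexp d) h ^ mexp d := by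
    intro h hin
    obtain ⟨hh1, hhm, hpos⟩ := hin
    have hnrm1 : (0:ℝ) ≤ nrm d 1 h := ENNReal.toReal_nonneg
    have hnrmm : (0:ℝ) ≤ nrm d (mexp d) h := ENNReal.toReal_nonneg
    have hRHS0 : 0 ≤ C * nrm d 1 h ^ (2 / (d : ℝ)) * nrm d (mexp d) h ^ mexp d :=
      mul_nonneg (mul_nonneg hCpos.le (Real.rpow_nonneg hnrm1 _)) (Real.rpow_nonneg hnrmm _)
    have hsm := hh1.aestronglyMeasurable
    set h₀ : E d → ℝ := hsm.mk h with hh₀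
    have heq : h =ᵐ[volume] h₀ := hsm.ae_eq_mk
    have hmeas₀ : Measurable h₀ := hsm.stronglyMeasurable_mk.measurable
    set g : E d → ℝ≥0∞ := fun x => ENNReal.ofReal (h₀ x) with hg
    have hgmeas : Measurable g := ENNReal.measurable_ofReal.comp hmeas₀
    have hgtop : ∀ x, g x ≠ ∞ := fun x => ENNReal.ofReal_ne_top
    set K : E d → ℝ≥0∞ := fun z => ((‖z‖₊ : ℝ≥0∞)) ^ (-((d : ℝ) - 2)) with hK
    have hKmeas : Measurable K := by
      rw [hK]; fun_prop
    set A : ℝ≥0∞ := ∫⁻ x, g x ∂volume with hAdef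
    set P : ℝ≥0∞ := ∫⁻ x, (g x) ^ (mexp d) ∂volume with hPdef
    have hgnn : ∀ᵐ x ∂volume, ((‖h x‖₊ : ℝ≥0∞)) = g x := by
      filter_upwards [hpos, heq] with x h1 h2
      rw [← enorm_eq_nnnorm, ← ofReal_norm, Real.norm_of_nonneg h1, hg]
      exact congrArg _ h2
    have hAE : A = eLpNorm h 1 volume := by
      rw [hAdef, eLpNorm_one_eq_lintegral_enorm]
      exact (lintegral_congr_ae hgnn).symm
    have hAtop : A ≠ ∞ := by rw [hAE]; exact hh1.2.ne
    have hA1 : A.toReal = nrm d 1 h := by rw [hAE]; simp [nrm, ENNReal.ofReal_one]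
    have hPE : P = (eLpNorm h (ENNReal.ofReal (mexp d)) volume) ^ (mexp d) := by
      rw [eLpNorm_eq_lintegral_rpow_enorm_toReal hmne0 ENNReal.ofReal_ne_top,
        ENNReal.toReal_ofReal hm0.le, ← ENNReal.rpow_mul, one_div,
        inv_mul_cancel₀ hm0.ne', ENNReal.rpow_one, hPdef]
      apply lintegral_congr_ae
      filter_upwards [hgnn] with x hx
      exact congrArg (· ^ mexp d) hx.symm
    have hPtop : P ≠ ∞ := by
      rw [hPE]; exact (ENNReal.rpow_lt_top_of_nonneg hm0.le hhm.2.ne).ne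
    have hPm : P.toReal = nrm d (mexp d) h ^ (mexp d) := by
      rw [hPE, ← ENNReal.toReal_rpow]; rfl
    set L : ℝ≥0∞ := ∫⁻ x, ∫⁻ y, g x * g y * K (x - y) ∂volume ∂volume with hLdef
    have hsplit : ∀ R : ℝ, 0 < R →
        L ≤ P ^ (2 / mexp d) * (CB * ENNReal.ofReal R) ^ (1 / q) +
            ENNReal.ofReal (R ^ (-((d : ℝ) - 2))) * (A * A) := by
      intro R hR
      set K1 : E d → ℝ≥0∞ := (ball (0 : E d) R).indicator K with hK1
      set K2 : E d → ℝ≥0∞ := ((ball (0 : E d) R)ᶜ).indicator K with hK2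
      have hK1meas : Measurable K1 := hKmeas.indicator measurableSet_ball
      have hK2meas : Measurable K2 := hKmeas.indicator measurableSet_ball.compl
      have hKadd : ∀ z, K z = K1 z + K2 z := by
        intro z
        by_cases hz : z ∈ ball (0 : E d) R
        · rw [hK1, hK2, Set.indicator_of_mem hz, Set.indicator_of_notMem (by simpa using hz),
            add_zero]
        · rw [hK1, hK2, Set.indicator_of_notMem hz, Set.indicator_of_mem (mem_compl hz), zero_add]
      have hG1 : Measurable (fun p : E d × E d => g p.1 * g p.2 * K1 (p.1 - p.2)) :=
        ((hgmeas.comp measurable_fst).mul (hgmeas.comp measurable_snd)).mul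
          (hK1meas.comp (measurable_fst.sub measurable_snd))
      have hsum : L = (∫⁻ x, ∫⁻ y, g x * g y * K1 (x - y)) +
          (∫⁻ x, ∫⁻ y, g x * g y * K2 (x - y)) := by
        have inner_eq : ∀ x, (∫⁻ y, g x * g y * K (x - y)) =
            (∫⁻ y, g x * g y * K1 (x - y)) + ∫⁻ y, g x * g y * K2 (x - y) := by
          intro x
          have hmm : Measurable (fun y : E d => g x * g y * K1 (x - y)) :=
            (measurable_const.mul hgmeas).mul (hK1meas.comp (measurable_const.sub measurable_id))
          rw [← lintegral_add_left hmm]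
          apply lintegral_congr
          intro y
          rw [hKadd (x - y)]
          ring
        rw [hLdef, lintegral_congr inner_eq]
        exact lintegral_add_left (hG1.lintegral_prod_right') _
      have hc2 : ENNReal.ofReal (R ^ (-((d : ℝ) - 2))) ≠ ∞ := ENNReal.ofReal_ne_top
      have hK2le : ∀ z, K2 z ≤ ENNReal.ofReal (R ^ (-((d : ℝ) - 2))) := by
        intro z
        by_cases hz : z ∈ (ball (0 : E d) R)ᶜ
        · have hzR : R ≤ ‖z‖ := by
            have h' := hz; rw [mem_compl_iff, mem_ball_zero_iff, not_lt] at h'; exact h'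
          rw [hK2, Set.indicator_of_mem hz]
          simp only [hK]
          calc ((‖z‖₊ : ℝ≥0∞)) ^ (-((d : ℝ) - 2)) ≤ (ENNReal.ofReal R) ^ (-((d : ℝ) - 2)) := by
                rw [ENNReal.rpow_neg ((‖z‖₊ : ℝ≥0∞)), ENNReal.rpow_neg (ENNReal.ofReal R)]
                refine ENNReal.inv_le_inv.mpr (ENNReal.rpow_le_rpow ?_ (by linarith))
                rw [← enorm_eq_nnnorm, ← ofReal_norm]
                exact ENNReal.ofReal_le_ofReal hzR
            _ = ENNReal.ofReal (R ^ (-((d : ℝ) - 2))) := ENNReal.ofReal_rpow_of_pos hR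
        · rw [hK2, Set.indicator_of_notMem hz]; exact zero_le
      have hT2 : (∫⁻ x, ∫⁻ y, g x * g y * K2 (x - y)) ≤
          ENNReal.ofReal (R ^ (-((d : ℝ) - 2))) * (A * A) := by
        calc (∫⁻ x, ∫⁻ y, g x * g y * K2 (x - y))
            ≤ ∫⁻ x, ∫⁻ y, (g x * ENNReal.ofReal (R ^ (-((d : ℝ) - 2)))) * g y := by
              apply lintegral_mono; intro x; apply lintegral_mono; intro y
              calc g x * g y * K2 (x - y)
                  ≤ g x * g y * ENNReal.ofReal (R ^ (-((d : ℝ) - 2))) :=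
                    mul_le_mul_right (hK2le _) _
                _ = (g x * ENNReal.ofReal (R ^ (-((d : ℝ) - 2)))) * g y := by ring
          _ = ∫⁻ x, (g x * ENNReal.ofReal (R ^ (-((d : ℝ) - 2)))) * A := by
              apply lintegral_congr; intro x
              rw [lintegral_const_mul' _ _ (ENNReal.mul_ne_top (hgtop x) hc2), ← hAdef]
          _ = (∫⁻ x, g x * ENNReal.ofReal (R ^ (-((d : ℝ) - 2)))) * A :=
              lintegral_mul_const' _ _ hAtop
          _ = (A * ENNReal.ofReal (R ^ (-((d : ℝ) - 2)))) * A := by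
              rw [lintegral_mul_const' _ _ hc2, ← hAdef]
          _ = ENNReal.ofReal (R ^ (-((d : ℝ) - 2))) * (A * A) := by ring
      have hIQle : (∫⁻ z, K1 z ^ q) ≤ CB * ENNReal.ofReal R := by
        have hpt : ∀ z, K1 z ^ q =
            (ball (0 : E d) R).indicator (fun z => ((‖z‖₊ : ℝ≥0∞)) ^ (-((d : ℝ) - 1))) z := by
          intro z
          by_cases hz : z ∈ ball (0 : E d) R
          · rw [hK1, Set.indicator_of_mem hz, Set.indicator_of_mem hz]
            simp only [hK]
            rw [← ENNReal.rpow_mul]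
            congr 1
            rw [hq]; field_simp
          · rw [hK1, Set.indicator_of_notMem hz, Set.indicator_of_notMem hz,
              ENNReal.zero_rpow_of_pos hq0]
        calc (∫⁻ z, K1 z ^ q)
            = ∫⁻ z in ball (0 : E d) R, ((‖z‖₊ : ℝ≥0∞)) ^ (-((d : ℝ) - 1)) := by
              rw [lintegral_congr hpt, lintegral_indicator measurableSet_ball]
          _ ≤ CB * ENNReal.ofReal R := by rw [hCB]; exact vhls_ball_bound d hd hR
      have hIQtop : (∫⁻ z, K1 z ^ q) ≠ ∞ :=
        ne_top_of_le_ne_top (ENNReal.mul_ne_top hCBtop ENNReal.ofReal_ne_top) hIQle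
      have htrans : ∀ x : E d, (∫⁻ y, K1 (x - y) ^ q) = ∫⁻ z, K1 z ^ q := by
        intro x
        have hsymm : ∀ y : E d, K1 (x - y) = K1 (y - x) := by
          intro y
          rw [hK1]
          have hmem : x - y ∈ ball (0 : E d) R ↔ y - x ∈ ball (0 : E d) R := by
            simp [mem_ball_zero_iff, norm_sub_rev]
          by_cases hz : y - x ∈ ball (0 : E d) R
          · rw [Set.indicator_of_mem (hmem.mpr hz), Set.indicator_of_mem hz]
            simp only [hK]
            rw [show ‖x - y‖₊ = ‖y - x‖₊ from by rw [← neg_sub y x, nnnorm_neg]]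
          · rw [Set.indicator_of_notMem (fun hcon => hz (hmem.mp hcon)),
              Set.indicator_of_notMem hz]
        simp_rw [hsymm]
        exact lintegral_sub_right_eq_self (fun z => K1 z ^ q) x
      set aa : ℝ := ((d : ℝ) - 2) / (2 * ((d : ℝ) - 1)) with haa
      set cc : ℝ := 1 / ((d : ℝ) - 1) with hcc
      have haa0 : 0 < aa := by rw [haa]; apply div_pos (by linarith) (by linarith)
      have hcc0 : 0 < cc := by rw [hcc]; apply div_pos (by linarith) (by linarith)
      have hsum3 : aa + aa + cc = 1 := by rw [haa, hcc]; field_simp; ring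
      have hmac : (mexp d) * aa + (mexp d) * cc = 1 := by rw [hm, haa, hcc]; field_simp; ring
      have hqaa : q * aa + q * aa = 1 := by rw [hq, haa]; field_simp; ring
      have habc : ∀ u v w : ℝ≥0∞, u * v * w =
          (u ^ (mexp d) * w ^ q) ^ aa * ((v ^ (mexp d) * w ^ q) ^ aa *
            (u ^ (mexp d) * v ^ (mexp d)) ^ cc) := by
        intro u v w
        rw [ENNReal.mul_rpow_of_nonneg _ _ haa0.le, ENNReal.mul_rpow_of_nonneg _ _ haa0.le,
          ENNReal.mul_rpow_of_nonneg _ _ hcc0.le,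
          ← ENNReal.rpow_mul u, ← ENNReal.rpow_mul w, ← ENNReal.rpow_mul v,
          ← ENNReal.rpow_mul u, ← ENNReal.rpow_mul v]
        rw [show u ^ (mexp d * aa) * w ^ (q * aa) * (v ^ (mexp d * aa) * w ^ (q * aa) *
              (u ^ (mexp d * cc) * v ^ (mexp d * cc))) =
            (u ^ (mexp d * aa) * u ^ (mexp d * cc)) * ((v ^ (mexp d * aa) * v ^ (mexp d * cc)) *
              (w ^ (q * aa) * w ^ (q * aa))) by ring]
        rw [← ENNReal.rpow_add_of_nonneg _ _ (mul_nonneg hm0.le haa0.le) (mul_nonneg hm0.le hcc0.le),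
          ← ENNReal.rpow_add_of_nonneg _ _ (mul_nonneg hm0.le haa0.le) (mul_nonneg hm0.le hcc0.le),
          ← ENNReal.rpow_add_of_nonneg _ _ (mul_nonneg hq0.le haa0.le) (mul_nonneg hq0.le haa0.le),
          hmac, hqaa, ENNReal.rpow_one, ENNReal.rpow_one, ENNReal.rpow_one]
        ring
      set F : Fin 3 → (E d × E d) → ℝ≥0∞ :=
        ![fun p => (g p.1) ^ (mexp d) * K1 (p.1 - p.2) ^ q,
          fun p => (g p.2) ^ (mexp d) * K1 (p.1 - p.2) ^ q,
          fun p => (g p.1) ^ (mexp d) * (g p.2) ^ (mexp d)] with hF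
      have hF0 : F 0 = fun p : E d × E d => (g p.1) ^ (mexp d) * K1 (p.1 - p.2) ^ q := rfl
      have hF1 : F 1 = fun p : E d × E d => (g p.2) ^ (mexp d) * K1 (p.1 - p.2) ^ q := rfl
      have hF2 : F 2 = fun p : E d × E d => (g p.1) ^ (mexp d) * (g p.2) ^ (mexp d) := rfl
      set pe : Fin 3 → ℝ := ![aa, aa, cc] with hpe
      have hpe0 : pe 0 = aa := rfl
      have hpe1 : pe 1 = aa := rfl
      have hpe2 : pe 2 = cc := rfl
      have hF0meas : Measurable (F 0) := by
        rw [hF0]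
        exact ((hgmeas.comp measurable_fst).pow_const _).mul
          ((hK1meas.comp (measurable_fst.sub measurable_snd)).pow_const _)
      have hF1meas : Measurable (F 1) := by
        rw [hF1]
        exact ((hgmeas.comp measurable_snd).pow_const _).mul
          ((hK1meas.comp (measurable_fst.sub measurable_snd)).pow_const _)
      have hF2meas : Measurable (F 2) := by
        rw [hF2]
        exact ((hgmeas.comp measurable_fst).pow_const _).mul
          ((hgmeas.comp measurable_snd).pow_const _)
      have hFmeas' : ∀ i ∈ Finset.univ, AEMeasurable (F i)
          ((volume : Measure (E d)).prod volume) := by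
        intro i _
        fin_cases i
        · exact hF0meas.aemeasurable
        · exact hF1meas.aemeasurable
        · exact hF2meas.aemeasurable
      have hpesum : ∑ i, pe i = 1 := by
        rw [Fin.sum_univ_three, hpe0, hpe1, hpe2]; exact hsum3
      have hpenn : ∀ i ∈ Finset.univ, 0 ≤ pe i := by
        intro i _
        fin_cases i
        · exact haa0.le
        · exact haa0.le
        · exact hcc0.le
      have hHolder := ENNReal.lintegral_prod_norm_pow_le
        (μ := (volume : Measure (E d)).prod volume) Finset.univ hFmeas' hpesum hpenn
      have hT1a : (∫⁻ x, ∫⁻ y, g x * g y * K1 (x - y)) =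
          ∫⁻ p, g p.1 * g p.2 * K1 (p.1 - p.2) ∂((volume : Measure (E d)).prod volume) :=
        (lintegral_prod _ hG1.aemeasurable).symm
      have hprodpt : ∀ p : E d × E d, g p.1 * g p.2 * K1 (p.1 - p.2) = ∏ i, F i p ^ pe i := by
        intro p
        rw [Fin.prod_univ_three, hpe0, hpe1, hpe2, hF0, hF1, hF2]
        rw [habc (g p.1) (g p.2) (K1 (p.1 - p.2))]
        ring
      have hIF0 : (∫⁻ p, F 0 p ∂((volume : Measure (E d)).prod volume)) =
          P * (∫⁻ z, K1 z ^ q) := by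
        rw [hF0, lintegral_prod _ (by rw [← hF0]; exact hF0meas.aemeasurable)]
        calc ∫⁻ x, ∫⁻ y, (g x) ^ (mexp d) * K1 (x - y) ^ q
            = ∫⁻ x, (g x) ^ (mexp d) * ∫⁻ y, K1 (x - y) ^ q := by
              apply lintegral_congr; intro x
              exact lintegral_const_mul' _ _ (ENNReal.rpow_lt_top_of_nonneg hm0.le (hgtop x)).ne
          _ = ∫⁻ x, (g x) ^ (mexp d) * (∫⁻ z, K1 z ^ q) := by
              apply lintegral_congr; intro x; rw [htrans x]
          _ = P * (∫⁻ z, K1 z ^ q) := by rw [lintegral_mul_const' _ _ hIQtop, ← hPdef]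
      have hIF1 : (∫⁻ p, F 1 p ∂((volume : Measure (E d)).prod volume)) =
          P * (∫⁻ z, K1 z ^ q) := by
        rw [hF1, lintegral_prod_symm _ (by rw [← hF1]; exact hF1meas.aemeasurable)]
        calc ∫⁻ y, ∫⁻ x, (g y) ^ (mexp d) * K1 (x - y) ^ q
            = ∫⁻ y, (g y) ^ (mexp d) * ∫⁻ x, K1 (x - y) ^ q := by
              apply lintegral_congr; intro y
              exact lintegral_const_mul' _ _ (ENNReal.rpow_lt_top_of_nonneg hm0.le (hgtop y)).ne
          _ = ∫⁻ y, (g y) ^ (mexp d) * (∫⁻ z, K1 z ^ q) := by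
              apply lintegral_congr; intro y
              congr 1
              exact lintegral_sub_right_eq_self (fun z => K1 z ^ q) y
          _ = P * (∫⁻ z, K1 z ^ q) := by rw [lintegral_mul_const' _ _ hIQtop, ← hPdef]
      have hIF2 : (∫⁻ p, F 2 p ∂((volume : Measure (E d)).prod volume)) = P * P := by
        rw [hF2, lintegral_prod _ (by rw [← hF2]; exact hF2meas.aemeasurable)]
        calc ∫⁻ x, ∫⁻ y, (g x) ^ (mexp d) * (g y) ^ (mexp d)
            = ∫⁻ x, (g x) ^ (mexp d) * P := by
              apply lintegral_congr; intro x
              rw [lintegral_const_mul' _ _ (ENNReal.rpow_lt_top_of_nonneg hm0.le (hgtop x)).ne,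
                ← hPdef]
          _ = P * P := by rw [lintegral_mul_const' _ _ hPtop, ← hPdef]
      have hT1 : (∫⁻ x, ∫⁻ y, g x * g y * K1 (x - y)) ≤
          P ^ (2 / mexp d) * (CB * ENNReal.ofReal R) ^ (1 / q) := by
        have step1 : (∫⁻ x, ∫⁻ y, g x * g y * K1 (x - y)) ≤
            (P * (∫⁻ z, K1 z ^ q)) ^ aa * ((P * (∫⁻ z, K1 z ^ q)) ^ aa * (P * P) ^ cc) := by
          rw [hT1a, lintegral_congr hprodpt]
          refine le_trans hHolder (le_of_eq ?_)
          rw [Fin.prod_univ_three, hpe0, hpe1, hpe2, hIF0, hIF1, hIF2]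
          ring
        have step2 : (P * (∫⁻ z, K1 z ^ q)) ^ aa * ((P * (∫⁻ z, K1 z ^ q)) ^ aa * (P * P) ^ cc) ≤
            (P * (CB * ENNReal.ofReal R)) ^ aa *
              ((P * (CB * ENNReal.ofReal R)) ^ aa * (P * P) ^ cc) := by
          have h1 : (P * (∫⁻ z, K1 z ^ q)) ^ aa ≤ (P * (CB * ENNReal.ofReal R)) ^ aa :=
            ENNReal.rpow_le_rpow (mul_le_mul_right hIQle P) haa0.le
          exact mul_le_mul' h1 (mul_le_mul' h1 le_rfl)
        have step3 : (P * (CB * ENNReal.ofReal R)) ^ aa *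
            ((P * (CB * ENNReal.ofReal R)) ^ aa * (P * P) ^ cc) =
            P ^ (2 / mexp d) * (CB * ENNReal.ofReal R) ^ (1 / q) := by
          rw [ENNReal.mul_rpow_of_nonneg _ _ haa0.le, ENNReal.mul_rpow_of_nonneg _ _ hcc0.le]
          rw [show P ^ aa * (CB * ENNReal.ofReal R) ^ aa *
              (P ^ aa * (CB * ENNReal.ofReal R) ^ aa * (P ^ cc * P ^ cc)) =
              (P ^ aa * P ^ aa * (P ^ cc * P ^ cc)) *
                ((CB * ENNReal.ofReal R) ^ aa * (CB * ENNReal.ofReal R) ^ aa) by ring]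
          rw [← ENNReal.rpow_add_of_nonneg _ _ haa0.le haa0.le,
            ← ENNReal.rpow_add_of_nonneg _ _ hcc0.le hcc0.le,
            ← ENNReal.rpow_add_of_nonneg _ _ (by linarith) (by linarith),
            ← ENNReal.rpow_add_of_nonneg _ _ haa0.le haa0.le]
          rw [show aa + aa + (cc + cc) = 2 / mexp d by rw [haa, hcc, hm]; field_simp; ring,
            show aa + aa = 1 / q by rw [haa, hq]; field_simp; ring]
        exact le_trans step1 (le_trans step2 (le_of_eq step3))
      rw [hsum]
      exact add_le_add hT1 hT2
    have hLtop : L ≠ ∞ := by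
      have h1 := hsplit 1 one_pos
      refine ne_top_of_le_ne_top ?_ h1
      apply ENNReal.add_ne_top.mpr
      constructor
      · exact ENNReal.mul_ne_top
          (ENNReal.rpow_lt_top_of_nonneg (div_nonneg (by norm_num) hm0.le) hPtop).ne
          (ENNReal.rpow_lt_top_of_nonneg (div_nonneg (by norm_num) hq0.le)
            (ENNReal.mul_ne_top hCBtop ENNReal.ofReal_ne_top)).ne
      · exact ENNReal.mul_ne_top ENNReal.ofReal_ne_top (ENNReal.mul_ne_top hAtop hAtop)
    have hWL : Wfun d h ≤ L.toReal := by
      have hW : Wfun d h = ∫ x, ∫ y, h x * h y * ‖x - y‖ ^ (-((d : ℝ) - 2)) := rfl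
      have hFae : 0 ≤ᵐ[volume] fun x : E d => ∫ y, h x * h y * ‖x - y‖ ^ (-((d : ℝ) - 2)) := by
        filter_upwards [hpos] with x hx
        apply integral_nonneg_of_ae
        filter_upwards [hpos] with y hy
        exact mul_nonneg (mul_nonneg hx hy) (Real.rpow_nonneg (norm_nonneg _) _)
      rw [hW]
      calc ∫ x, ∫ y, h x * h y * ‖x - y‖ ^ (-((d : ℝ) - 2))
          ≤ (∫⁻ x, ENNReal.ofReal (∫ y, h x * h y * ‖x - y‖ ^ (-((d : ℝ) - 2)))).toReal :=
            vhls_integral_le hFae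
        _ ≤ L.toReal := by
            apply ENNReal.toReal_mono hLtop
            rw [hLdef]
            apply lintegral_mono_ae
            filter_upwards [hpos, heq] with x hx hx0
            calc ENNReal.ofReal (∫ y, h x * h y * ‖x - y‖ ^ (-((d : ℝ) - 2)))
                ≤ ENNReal.ofReal
                    ((∫⁻ y, ENNReal.ofReal (h x * h y * ‖x - y‖ ^ (-((d : ℝ) - 2)))).toReal) := by
                  apply ENNReal.ofReal_le_ofReal
                  apply vhls_integral_le
                  filter_upwards [hpos] with y hy
                  exact mul_nonneg (mul_nonneg hx hy) (Real.rpow_nonneg (norm_nonneg _) _)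
              _ ≤ ∫⁻ y, ENNReal.ofReal (h x * h y * ‖x - y‖ ^ (-((d : ℝ) - 2))) :=
                  ENNReal.ofReal_toReal_le
              _ ≤ ∫⁻ y, g x * g y * K (x - y) := by
                  apply lintegral_mono_ae
                  filter_upwards [hpos, heq] with y hy hy0
                  rw [ENNReal.ofReal_mul (mul_nonneg hx hy), ENNReal.ofReal_mul hx]
                  have e1 : ENNReal.ofReal (h x) = g x := by rw [hg]; exact congrArg _ hx0
                  have e2 : ENNReal.ofReal (h y) = g y := by rw [hg]; exact congrArg _ hy0
                  rw [e1, e2]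
                  apply mul_le_mul_right
                  rcases eq_or_lt_of_le (norm_nonneg (x - y)) with hz | hz
                  · rw [← hz, Real.zero_rpow (by intro hcon; rw [neg_eq_zero] at hcon; exact hd2 hcon)]
                    simp
                  · simp only [hK]
                    rw [← enorm_eq_nnnorm, ← ofReal_norm, ENNReal.ofReal_rpow_of_pos hz]
    by_cases hzero : h =ᵐ[volume] 0
    · have hg0 : ∀ᵐ x ∂volume, g x = 0 := by
        filter_upwards [heq, hzero] with x h1 h2
        rw [hg]
        simp only []
        rw [← h1, h2]
        simp
      have hL0 : L = 0 := by
        have hinner : ∀ᵐ x ∂volume, (∫⁻ y, g x * g y * K (x - y)) = 0 := by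
          filter_upwards [hg0] with x hx
          simp [hx]
        rw [hLdef]
        calc (∫⁻ x, ∫⁻ y, g x * g y * K (x - y)) = ∫⁻ _ : E d, (0:ℝ≥0∞) :=
              lintegral_congr_ae hinner
          _ = 0 := lintegral_zero
      rw [hL0] at hWL
      simp only [ENNReal.toReal_zero] at hWL
      linarith
    · have hA0 : A ≠ 0 := by
        intro hA0'
        exact hzero ((eLpNorm_eq_zero_iff hsm one_ne_zero).mp (by rw [← hAE]; exact hA0'))
      have hP0 : P ≠ 0 := by
        intro hP0'
        apply hzero
        rw [← eLpNorm_eq_zero_iff hsm hmne0]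
        rw [hPE] at hP0'
        rcases ENNReal.rpow_eq_zero_iff.mp hP0' with ⟨h1, _⟩ | ⟨_, h2⟩
        · exact h1
        · linarith
      have hA'pos : 0 < A.toReal := ENNReal.toReal_pos hA0 hAtop
      have hP'pos : 0 < P.toReal := ENNReal.toReal_pos hP0 hPtop
      have hreal : ∀ R : ℝ, 0 < R →
          L.toReal ≤ (P.toReal ^ (2 / mexp d) * CB.toReal ^ (1 / q)) * R ^ (1 / q) +
            (A.toReal * A.toReal) * R ^ (-((d : ℝ) - 2)) := by
        intro R hR
        have hbne : (P ^ (2 / mexp d) * (CB * ENNReal.ofReal R) ^ (1 / q) +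
            ENNReal.ofReal (R ^ (-((d : ℝ) - 2))) * (A * A)) ≠ ∞ := by
          apply ENNReal.add_ne_top.mpr
          constructor
          · exact ENNReal.mul_ne_top
              (ENNReal.rpow_lt_top_of_nonneg (div_nonneg (by norm_num) hm0.le) hPtop).ne
              (ENNReal.rpow_lt_top_of_nonneg (div_nonneg (by norm_num) hq0.le)
                (ENNReal.mul_ne_top hCBtop ENNReal.ofReal_ne_top)).ne
          · exact ENNReal.mul_ne_top ENNReal.ofReal_ne_top (ENNReal.mul_ne_top hAtop hAtop)
        refine le_trans (ENNReal.toReal_mono hbne (hsplit R hR)) (le_of_eq ?_)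
        rw [ENNReal.toReal_add (by
              exact ENNReal.mul_ne_top
                (ENNReal.rpow_lt_top_of_nonneg (div_nonneg (by norm_num) hm0.le) hPtop).ne
                (ENNReal.rpow_lt_top_of_nonneg (div_nonneg (by norm_num) hq0.le)
                  (ENNReal.mul_ne_top hCBtop ENNReal.ofReal_ne_top)).ne)
            (ENNReal.mul_ne_top ENNReal.ofReal_ne_top (ENNReal.mul_ne_top hAtop hAtop)),
          ENNReal.toReal_mul, ENNReal.toReal_mul, ENNReal.toReal_mul,
          ← ENNReal.toReal_rpow, ← ENNReal.toReal_rpow, ENNReal.toReal_mul,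
          ENNReal.toReal_ofReal hR.le, ENNReal.toReal_ofReal (Real.rpow_nonneg hR.le _)]
        rw [Real.mul_rpow ENNReal.toReal_nonneg hR.le]
        ring
      obtain ⟨R, hRpos, hRopt⟩ := vhls_opt (s := 1 / q) (t := (d : ℝ) - 2)
        (one_div_pos.mpr hq0) (by linarith)
        (X := P.toReal ^ (2 / mexp d) * CB.toReal ^ (1 / q)) (Y := A.toReal * A.toReal)
        (mul_pos (Real.rpow_pos_of_pos hP'pos _) (Real.rpow_pos_of_pos hCBr _))
        (mul_pos hA'pos hA'pos)
      have hfinal := le_trans (hreal R hRpos) hRopt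
      have hqinv : 1 / q = ((d : ℝ) - 2) / ((d : ℝ) - 1) := by rw [hq, one_div_div]
      have hD : 1 / q + ((d : ℝ) - 2) = ((d : ℝ) - 2) * (d : ℝ) / ((d : ℝ) - 1) := by
        rw [hqinv]; field_simp; ring
      have hτ : ((d : ℝ) - 2) / (1 / q + ((d : ℝ) - 2)) = ((d : ℝ) - 1) / (d : ℝ) := by
        rw [hD, div_div_eq_mul_div, mul_div_mul_left _ _ hd2]
      have hσ : (1 / q) / (1 / q + ((d : ℝ) - 2)) = 1 / (d : ℝ) := by
        rw [hD, hqinv, div_div_eq_mul_div, div_mul_cancel₀ _ hd1, ← div_div, div_self hd2]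
      rw [hτ, hσ] at hfinal
      have hXpow : (P.toReal ^ (2 / mexp d) * CB.toReal ^ (1 / q)) ^ (((d : ℝ) - 1) / (d : ℝ)) =
          P.toReal * CB.toReal ^ (((d : ℝ) - 2) / (d : ℝ)) := by
        rw [Real.mul_rpow (Real.rpow_nonneg hP'pos.le _) (Real.rpow_nonneg ENNReal.toReal_nonneg _),
          ← Real.rpow_mul hP'pos.le, ← Real.rpow_mul ENNReal.toReal_nonneg,
          show 2 / mexp d * (((d : ℝ) - 1) / (d : ℝ)) = 1 by rw [hm]; field_simp <;> ring,
          show 1 / q * (((d : ℝ) - 1) / (d : ℝ)) = ((d : ℝ) - 2) / (d : ℝ) by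
            rw [hq]; field_simp <;> ring,
          Real.rpow_one]
      have hYpow : (A.toReal * A.toReal) ^ (1 / (d : ℝ)) = A.toReal ^ (2 / (d : ℝ)) := by
        rw [show A.toReal * A.toReal = A.toReal ^ ((2 : ℕ) : ℝ) by
            rw [Real.rpow_natCast]; ring_nf,
          ← Real.rpow_mul ENNReal.toReal_nonneg,
          show ((2 : ℕ) : ℝ) * (1 / (d : ℝ)) = 2 / (d : ℝ) by push_cast; ring]
      rw [hXpow, hYpow] at hfinal
      calc Wfun d h ≤ L.toReal := hWL
        _ ≤ 2 * (P.toReal * CB.toReal ^ (((d : ℝ) - 2) / (d : ℝ)) * A.toReal ^ (2 / (d : ℝ))) :=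
            hfinal
        _ = C * A.toReal ^ (2 / (d : ℝ)) * P.toReal := by rw [hC]; ring
        _ = C * nrm d 1 h ^ (2 / (d : ℝ)) * nrm d (mexp d) h ^ mexp d := by
            rw [hA1, hPm]
  refine ⟨C, hCpos, main, ⟨C, ?_⟩⟩
  rintro r ⟨h, hin, hne, rfl⟩
  have hsm1 : AEStronglyMeasurable h volume := hin.1.aestronglyMeasurable
  have h1pos : 0 < nrm d 1 h := by
    apply ENNReal.toReal_pos
    · rw [ENNReal.ofReal_one]
      intro hc
      exact hne ((eLpNorm_eq_zero_iff hsm1 one_ne_zero).mp hc)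
    · rw [ENNReal.ofReal_one]
      exact hin.1.2.ne
  have hmpos : 0 < nrm d (mexp d) h := by
    apply ENNReal.toReal_pos
    · intro hc
      exact hne ((eLpNorm_eq_zero_iff hsm1 hmne0).mp hc)
    · exact hin.2.1.2.ne
  have hden : 0 < nrm d 1 h ^ (2 / (d : ℝ)) * nrm d (mexp d) h ^ mexp d :=
    mul_pos (Real.rpow_pos_of_pos h1pos _) (Real.rpow_pos_of_pos hmpos _)
  rw [div_le_iff₀ hden]
  calc Wfun d h ≤ C * nrm d 1 h ^ (2 / (d : ℝ)) * nrm d (mexp d) h ^ mexp d := main h hin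
    _ = C * (nrm d 1 h ^ (2 / (d : ℝ)) * nrm d (mexp d) h ^ mexp d) := by ring
end
end

section
/- For every M with 0 < M ≤ M_c, the infimum of the free energy over 𝒴_M is zero: μ_M = inf{ ℱ[h] : h ∈ 𝒴_M } = 0. -/
open MeasureTheory Real Metric Set

noncomputable section

open scoped ENNReal NNReal

section auxlemmas

variable {d : ℕ}

lemma mexp_sub_one_pos (hd : 3 ≤ d) : 0 < mexp d - 1 := by
  have hd0 : (0:ℝ) < d := by exact_mod_cast (by omega : 0 < d)
  have hd3 : (3:ℝ) ≤ d := by exact_mod_cast hd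
  rw [mexp, sub_pos, lt_div_iff₀ hd0]
  linarith

lemma mexp_lt_two (hd : 3 ≤ d) : mexp d < 2 := by
  have hd0 : (0:ℝ) < d := by exact_mod_cast (by omega : 0 < d)
  rw [mexp, div_lt_iff₀ hd0]
  linarith

lemma mexp_pos (hd : 3 ≤ d) : 0 < mexp d := by
  have := mexp_sub_one_pos hd; linarith

lemma sigmaD_pos (hd : 3 ≤ d) : 0 < sigmaD d := by
  have hd0 : (0:ℝ) < d := by exact_mod_cast (by omega : 0 < d)
  have h1 : 0 < Real.pi ^ ((d : ℝ) / 2) := Real.rpow_pos_of_pos Real.pi_pos _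
  have h2 : 0 < Real.Gamma ((d : ℝ) / 2) := Real.Gamma_pos_of_pos (by linarith)
  exact div_pos (by linarith) h2

lemma cD_pos (hd : 3 ≤ d) : 0 < cD d := by
  have hd3 : (3:ℝ) ≤ d := by exact_mod_cast hd
  exact div_pos one_pos (mul_pos (by linarith) (sigmaD_pos hd))

/-- The integral of `h^m` equals the `m`-th power of the `L^m` norm. -/
lemma integral_rpow_eq_nrm (hd : 3 ≤ d) (h : E d → ℝ)
    (hmem : MemLp h (ENNReal.ofReal (mexp d)) volume) (hpos : 0 ≤ᵐ[volume] h) :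
    ∫ x : E d, h x ^ mexp d = nrm d (mexp d) h ^ mexp d := by
  have hm : 0 < mexp d := mexp_pos hd
  set p : ENNReal := ENNReal.ofReal (mexp d) with hp
  have hp0 : p ≠ 0 := by simp [hp, ENNReal.ofReal_eq_zero, not_le, hm]
  have hpt : p ≠ ∞ := ENNReal.ofReal_ne_top
  have hptr : p.toReal = mexp d := ENNReal.toReal_ofReal hm.le
  have hcont : Continuous fun x : ℝ => x ^ mexp d := by
    rw [continuous_iff_continuousAt]
    intro x
    exact Real.continuousAt_rpow_const x (mexp d) (Or.inr hm.le)
  have hsm : AEStronglyMeasurable (fun x : E d => h x ^ mexp d) volume :=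
    hcont.comp_aestronglyMeasurable hmem.1
  have hnn : 0 ≤ᵐ[volume] fun x : E d => h x ^ mexp d := by
    filter_upwards [hpos] with x hx
    exact Real.rpow_nonneg hx _
  set L : ENNReal := ∫⁻ x : E d, ‖h x‖ₑ ^ mexp d with hL
  have hLint : (∫⁻ x : E d, ENNReal.ofReal (h x ^ mexp d)) = L := by
    refine lintegral_congr_ae ?_
    filter_upwards [hpos] with x hx
    rw [← ENNReal.ofReal_rpow_of_nonneg hx hm.le, Real.enorm_eq_ofReal hx]
  have help : eLpNorm h p volume = L ^ (1 / mexp d) := by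
    rw [eLpNorm_eq_lintegral_rpow_enorm_toReal hp0 hpt, hptr]
  have hLtop : L ≠ ∞ := by
    have h1 : (L ^ (1 / mexp d)) ^ mexp d = L := by
      rw [← ENNReal.rpow_mul, one_div, inv_mul_cancel₀ hm.ne', ENNReal.rpow_one]
    rw [← h1]
    exact ENNReal.rpow_ne_top_of_nonneg hm.le
      (by rw [← help]; exact hmem.eLpNorm_ne_top)
  have hR : nrm d (mexp d) h ^ mexp d = L.toReal := by
    rw [nrm, ← hp, help, ENNReal.toReal_rpow, ← ENNReal.rpow_mul, one_div,
      inv_mul_cancel₀ hm.ne', ENNReal.rpow_one]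
  rw [integral_eq_lintegral_of_nonneg_ae hnn hsm, hLint, hR]

/-- Lower bound: the free energy is nonnegative on `YM d M` for `M ≤ Mc d`. -/
lemma Ffun_nonneg (hd : 3 ≤ d) {M : ℝ} (hM : 0 < M) (hMc : M ≤ Mc d)
    {h : E d → ℝ} (hh : h ∈ YM d M) : 0 ≤ Ffun d h := by
  have hm1 : 0 < mexp d - 1 := mexp_sub_one_pos hd
  have hcd : 0 < cD d := cD_pos hd
  have hd0 : (0:ℝ) < d := by exact_mod_cast (by omega : 0 < d)
  set S := { r : ℝ | ∃ g : E d → ℝ, InL1Lm d g ∧ ¬ (g =ᵐ[volume] 0) ∧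
    r = Wfun d g / (nrm d 1 g ^ (2 / (d : ℝ)) * nrm d (mexp d) g ^ mexp d) } with hS
  have hCs : Cstar d = sSup S := rfl
  by_cases hB : BddAbove S
  · obtain ⟨⟨hL1, hLm, hpos⟩, hn1⟩ := hh
    have hne : ¬ (h =ᵐ[volume] 0) := by
      intro h0
      have : nrm d 1 h = 0 := by
        rw [nrm, eLpNorm_congr_ae h0, eLpNorm_zero, ENNReal.toReal_zero]
      rw [hn1] at this; exact absurd this hM.ne'
    set Dm := nrm d (mexp d) h with hDm
    have hDmpos : 0 < Dm := by
      refine ENNReal.toReal_pos ?_ hLm.eLpNorm_ne_top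
      rw [Ne, eLpNorm_eq_zero_iff hLm.1 (by simp [ENNReal.ofReal_eq_zero, not_le, mexp_pos hd])]
      exact hne
    have hrS : Wfun d h / (nrm d 1 h ^ (2 / (d : ℝ)) * Dm ^ mexp d) ∈ S :=
      ⟨h, ⟨hL1, hLm, hpos⟩, hne, rfl⟩
    have hle := le_csSup hB hrS
    rw [← hCs] at hle
    have hDpos : 0 < nrm d 1 h ^ (2 / (d : ℝ)) * Dm ^ mexp d := by
      rw [hn1]
      exact mul_pos (Real.rpow_pos_of_pos hM _) (Real.rpow_pos_of_pos hDmpos _)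
    have hW : Wfun d h ≤ Cstar d * (M ^ (2 / (d : ℝ)) * Dm ^ mexp d) := by
      have := (div_le_iff₀ hDpos).mp hle
      rwa [hn1] at this
    have hkey : cD d / 2 * Cstar d * M ^ (2 / (d : ℝ)) ≤ 1 / (mexp d - 1) := by
      rcases le_or_gt (Cstar d) 0 with hC | hC
      · have h1 : cD d / 2 * Cstar d * M ^ (2 / (d : ℝ)) ≤ 0 := by
          have := Real.rpow_pos_of_pos hM (2 / (d : ℝ))
          have h2 : cD d / 2 * Cstar d ≤ 0 :=
            mul_nonpos_iff.2 (Or.inl ⟨by linarith, hC⟩)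
          exact mul_nonpos_iff.2 (Or.inr ⟨h2, this.le⟩)
        have h2 : (0:ℝ) ≤ 1 / (mexp d - 1) := by positivity
        linarith
      · set b := 2 / ((mexp d - 1) * Cstar d * cD d) with hb
        have hbpos : 0 < b := by
          rw [hb]; positivity
        have hMb : M ^ (2 / (d : ℝ)) ≤ b := by
          have h1 : M ^ (2 / (d : ℝ)) ≤ (b ^ ((d : ℝ) / 2)) ^ (2 / (d : ℝ)) :=
            Real.rpow_le_rpow hM.le hMc (by positivity)
          rwa [← Real.rpow_mul hbpos.le, div_mul_div_comm, mul_comm ((d:ℝ)) 2,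
            div_self (by positivity), Real.rpow_one] at h1
        have heq : cD d / 2 * Cstar d * b = 1 / (mexp d - 1) := by
          rw [hb]
          field_simp
        calc cD d / 2 * Cstar d * M ^ (2 / (d : ℝ))
            ≤ cD d / 2 * Cstar d * b := by
              apply mul_le_mul_of_nonneg_left hMb (by positivity)
          _ = 1 / (mexp d - 1) := heq
    have hI : ∫ x : E d, h x ^ mexp d = Dm ^ mexp d :=
      integral_rpow_eq_nrm hd h hLm hpos
    have hDmm : (0:ℝ) ≤ Dm ^ mexp d := Real.rpow_nonneg hDmpos.le _
    have hfinal : cD d / 2 * Wfun d h ≤ 1 / (mexp d - 1) * Dm ^ mexp d := by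
      calc cD d / 2 * Wfun d h
          ≤ cD d / 2 * (Cstar d * (M ^ (2 / (d : ℝ)) * Dm ^ mexp d)) :=
            mul_le_mul_of_nonneg_left hW (by positivity)
        _ = (cD d / 2 * Cstar d * M ^ (2 / (d : ℝ))) * Dm ^ mexp d := by ring
        _ ≤ 1 / (mexp d - 1) * Dm ^ mexp d :=
            mul_le_mul_of_nonneg_right hkey hDmm
    rw [Ffun, hI]
    linarith
  · exfalso
    have hC0 : Cstar d = 0 := by rw [hCs]; exact Real.sSup_of_not_bddAbove hB
    have : Mc d = 0 := by
      rw [Mc, hC0, mul_zero, zero_mul, div_zero, Real.zero_rpow (by positivity)]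
    rw [this] at hMc
    exact absurd (hM.trans_le hMc) (lt_irrefl 0)

/-- There exist elements of `YM d M` with arbitrarily small free energy. -/
lemma exists_Ffun_lt (hd : 3 ≤ d) {M : ℝ} (hM : 0 < M) {ε : ℝ} (hε : 0 < ε) :
    ∃ h ∈ YM d M, Ffun d h < ε := by
  have hm1 : 0 < mexp d - 1 := mexp_sub_one_pos hd
  have hm0 : 0 < mexp d := mexp_pos hd
  have hcd : 0 < cD d := cD_pos hd
  haveI : Nontrivial (E d) :=
    Module.nontrivial_of_finrank_pos (R := ℝ)
      (by rw [finrank_euclideanSpace_fin]; omega)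
  set δ : ℝ := ε * (mexp d - 1) / M with hδdef
  have hδ : 0 < δ := by positivity
  set δ' : ℝ := δ ^ (1 / (mexp d - 1)) with hδ'def
  have hδ' : 0 < δ' := Real.rpow_pos_of_pos hδ _
  set v1 : ℝ := (volume (ball (0 : E d) 1)).toReal with hv1def
  have hv1 : 0 < v1 :=
    ENNReal.toReal_pos (measure_ball_pos volume _ one_pos).ne' measure_ball_lt_top.ne
  set A : ℝ := M / δ' with hAdef
  have hA : 0 < A := by positivity
  obtain ⟨n₀, hn₀⟩ := exists_nat_gt (A / v1)
  set n : ℕ := max n₀ 1 with hndef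
  set R : ℝ := (n : ℝ) with hRdef
  have hR1 : 1 ≤ R := by
    rw [hRdef]; exact_mod_cast Nat.one_le_iff_ne_zero.mpr (by simp [hndef])
  have hR0 : 0 < R := lt_of_lt_of_le one_pos hR1
  set s : Set (E d) := ball (0 : E d) R with hsdef
  have hs : MeasurableSet s := measurableSet_ball
  have hμs : volume s ≠ ∞ := measure_ball_lt_top.ne
  have hvol : volume s = ENNReal.ofReal (R ^ d) * volume (ball (0 : E d) 1) := by
    rw [hsdef]
    have := MeasureTheory.Measure.addHaar_ball (volume : Measure (E d)) (0 : E d) hR0.le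
    rwa [finrank_euclideanSpace_fin] at this
  set v : ℝ := (volume s).toReal with hvdef
  have hvval : v = R ^ d * v1 := by
    rw [hvdef, hvol, ENNReal.toReal_mul, ENNReal.toReal_ofReal (by positivity), hv1def]
  have hAv : A < v := by
    have h1 : A < (n₀ : ℝ) * v1 := (div_lt_iff₀ hv1).mp hn₀
    have h2 : (n₀ : ℝ) ≤ R := by
      rw [hRdef]; exact_mod_cast le_max_left n₀ 1
    have h3 : R ≤ R ^ d := le_self_pow₀ hR1 (by omega)
    calc A < (n₀ : ℝ) * v1 := h1
      _ ≤ R * v1 := by nlinarith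
      _ ≤ R ^ d * v1 := by nlinarith
      _ = v := hvval.symm
  have hv0 : 0 < v := hA.trans hAv
  set c : ℝ := M / v with hcdef
  have hc0 : 0 < c := by positivity
  set h : E d → ℝ := s.indicator (fun _ => c) with hhdef
  have hind_nonneg : ∀ x, 0 ≤ h x := fun x =>
    Set.indicator_nonneg (fun _ _ => hc0.le) x
  have hmem : ∀ p : ENNReal, MemLp h p volume := fun p =>
    memLp_indicator_const p hs c (Or.inr hμs)
  have hpos : 0 ≤ᵐ[volume] h := Filter.Eventually.of_forall hind_nonneg
  have hnrm : nrm d 1 h = M := by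
    rw [nrm, ENNReal.ofReal_one, hhdef,
      eLpNorm_indicator_const hs one_ne_zero ENNReal.one_ne_top]
    simp only [ENNReal.toReal_one, div_one, ENNReal.rpow_one, ENNReal.toReal_mul]
    rw [toReal_enorm, Real.norm_of_nonneg hc0.le, ← hvdef, hcdef,
      div_mul_cancel₀ M hv0.ne']
  have hYM : h ∈ YM d M := ⟨⟨hmem 1, hmem _, hpos⟩, hnrm⟩
  refine ⟨h, hYM, ?_⟩
  have hIm : ∫ x : E d, h x ^ mexp d = c ^ mexp d * v := by
    have heq : (fun x : E d => h x ^ mexp d) = s.indicator (fun _ => c ^ mexp d) := by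
      funext x
      by_cases hx : x ∈ s
      · simp [hhdef, Set.indicator_of_mem hx]
      · simp [hhdef, Set.indicator_of_notMem hx, Real.zero_rpow hm0.ne']
    rw [heq, integral_indicator_const _ hs, smul_eq_mul, measureReal_def, ← hvdef, mul_comm]
  have hWnn : 0 ≤ Wfun d h := by
    refine integral_nonneg fun x => integral_nonneg fun y => ?_
    exact mul_nonneg (mul_nonneg (hind_nonneg x) (hind_nonneg y))
      (Real.rpow_nonneg (norm_nonneg _) _)
  have hcm : c ^ mexp d * v = c ^ (mexp d - 1) * M := by
    have : c ^ mexp d = c ^ (mexp d - 1) * c := by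
      rw [← Real.rpow_add_one hc0.ne' (mexp d - 1), sub_add_cancel]
    rw [this, mul_assoc, hcdef, div_mul_cancel₀ M hv0.ne']
  have hcδ' : c < δ' := by
    rw [hcdef, div_lt_iff₀ hv0]
    have := (div_lt_iff₀ hδ').mp hAv
    rw [hAdef] at hAv
    have h2 : M < δ' * v := by
      have := (div_lt_iff₀ hδ').mp hAv
      linarith [mul_comm v δ']
    linarith [mul_comm δ' v, h2]
  have hpow : c ^ (mexp d - 1) < δ := by
    have h1 : c ^ (mexp d - 1) < δ' ^ (mexp d - 1) :=
      Real.rpow_lt_rpow hc0.le hcδ' hm1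
    have h2 : δ' ^ (mexp d - 1) = δ := by
      rw [hδ'def, ← Real.rpow_mul hδ.le, one_div,
        inv_mul_cancel₀ hm1.ne', Real.rpow_one]
    linarith
  have hfin : 1 / (mexp d - 1) * (c ^ (mexp d - 1) * M) < ε := by
    have h1 : c ^ (mexp d - 1) * M < δ * M :=
      mul_lt_mul_of_pos_right hpow hM
    have h2 : 1 / (mexp d - 1) * (δ * M) = ε := by
      rw [hδdef]; field_simp
    have h3 : (0:ℝ) < 1 / (mexp d - 1) := by positivity
    nlinarith
  have : Ffun d h ≤ 1 / (mexp d - 1) * (c ^ (mexp d - 1) * M) := by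
    rw [Ffun, hIm, hcm]
    have : 0 ≤ cD d / 2 * Wfun d h := by positivity
    linarith
  linarith

end auxlemmas

/-- For `0 < M ≤ M_c` the infimum of the free energy over `𝒴_M` equals zero. -/
theorem freeEnergy_inf_eq_zero (d : ℕ) (hd : 3 ≤ d) (M : ℝ) (hM : 0 < M)
    (hMc : M ≤ Mc d) :
    IsGLB (Ffun d '' YM d M) 0 := by
  constructor
  · rintro y ⟨h, hh, rfl⟩
    exact Ffun_nonneg hd hM hMc hh
  · intro b hb
    by_contra hb0
    push_neg at hb0
    obtain ⟨h, hhY, hlt⟩ := exists_Ffun_lt hd hM hb0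
    exact absurd (hb ⟨h, hhY, rfl⟩) (not_le.mpr hlt)
end
end

section
/- For every M > M_c the free energy is unbounded below on 𝒴_M: for every A ∈ ℝ there exists h ∈ 𝒴_M with ℱ[h] < A (i.e. μ_M = −∞). -/
open MeasureTheory Real Metric Set

noncomputable section

namespace FEaux

open scoped ENNReal NNReal

open Module

lemma dR3 {d : ℕ} (hd : 3 ≤ d) : (3:ℝ) ≤ (d:ℝ) := by exact_mod_cast hd

lemma dRpos {d : ℕ} (hd : 3 ≤ d) : (0:ℝ) < (d:ℝ) := lt_of_lt_of_le (by norm_num) (dR3 hd)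

lemma mexp_sub_one {d : ℕ} (hd : 3 ≤ d) : mexp d - 1 = ((d:ℝ) - 2) / d := by
  have h0 : (d:ℝ) ≠ 0 := (dRpos hd).ne'
  rw [mexp]
  field_simp
  ring

lemma one_lt_mexp {d : ℕ} (hd : 3 ≤ d) : 1 < mexp d := by
  have h := dR3 hd
  rw [mexp, lt_div_iff₀ (dRpos hd)]
  linarith

lemma mexp_lt_two {d : ℕ} (hd : 3 ≤ d) : mexp d < 2 := by
  have h := dR3 hd
  rw [mexp, div_lt_iff₀ (dRpos hd)]
  linarith

lemma msub_pos {d : ℕ} (hd : 3 ≤ d) : 0 < mexp d - 1 := by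
  have := one_lt_mexp hd; linarith

lemma sigmaD_pos {d : ℕ} (hd : 3 ≤ d) : 0 < sigmaD d := by
  have h1 : 0 < Real.Gamma ((d:ℝ)/2) := Real.Gamma_pos_of_pos (by linarith [dR3 hd])
  have h2 : 0 < Real.pi ^ ((d:ℝ)/2) := Real.rpow_pos_of_pos Real.pi_pos _
  rw [sigmaD]; positivity

lemma cD_pos {d : ℕ} (hd : 3 ≤ d) : 0 < cD d := by
  have h2 : 0 < (d:ℝ) - 2 := by linarith [dR3 hd]
  have := sigmaD_pos hd
  rw [cD]; positivity

lemma nrm_rpow_eq {d : ℕ} {h : E d → ℝ} {p : ℝ} (hp : 0 < p)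
    (hm : MemLp h (ENNReal.ofReal p) volume) (hpos : 0 ≤ᵐ[volume] h) :
    nrm d p h ^ p = ∫ x, h x ^ p := by
  have hp0 : ENNReal.ofReal p ≠ 0 := by simp [ENNReal.ofReal_eq_zero, not_le, hp]
  have hkey := hm.eLpNorm_eq_integral_rpow_norm hp0 ENNReal.ofReal_ne_top
  rw [ENNReal.toReal_ofReal hp.le] at hkey
  have hX : 0 ≤ ∫ x, ‖h x‖ ^ p := integral_nonneg fun x => Real.rpow_nonneg (norm_nonneg _) _
  have h1 : nrm d p h = (∫ x, ‖h x‖ ^ p) ^ p⁻¹ := by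
    rw [nrm, hkey, ENNReal.toReal_ofReal (Real.rpow_nonneg hX _)]
  have h2 : (∫ x, ‖h x‖ ^ p) = ∫ x, h x ^ p := by
    refine integral_congr_ae ?_
    filter_upwards [hpos] with x hx
    rw [Real.norm_of_nonneg hx]
  rw [h1, ← Real.rpow_mul hX, inv_mul_cancel₀ hp.ne', Real.rpow_one, h2]

lemma nrm_one_eq {d : ℕ} {h : E d → ℝ} (hm : MemLp h 1 volume) (hpos : 0 ≤ᵐ[volume] h) :
    nrm d 1 h = ∫ x, h x := by
  have hm' : MemLp h (ENNReal.ofReal 1) volume := by rwa [ENNReal.ofReal_one]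
  have := nrm_rpow_eq one_pos hm' hpos
  simpa [Real.rpow_one] using this

lemma nrm_pos {d : ℕ} {h : E d → ℝ} {p : ℝ} (hp : 0 < p)
    (hm : MemLp h (ENNReal.ofReal p) volume) (hne : ¬ (h =ᵐ[volume] 0)) :
    0 < nrm d p h := by
  have hp0 : ENNReal.ofReal p ≠ 0 := by simp [ENNReal.ofReal_eq_zero, not_le, hp]
  refine ENNReal.toReal_pos ?_ hm.2.ne
  intro h0
  exact hne ((eLpNorm_eq_zero_iff hm.1 hp0).mp h0)

lemma nrm_const_mul {d : ℕ} (h : E d → ℝ) {c : ℝ} (hc : 0 ≤ c) (p : ℝ) :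
    nrm d p (fun x => c * h x) = c * nrm d p h := by
  rw [nrm, show (fun x => c * h x) = c • h from rfl, eLpNorm_const_smul, nrm]
  simp [ENNReal.smul_def, ENNReal.toReal_mul, Real.norm_of_nonneg hc]


lemma Wfun_eq_inner {d : ℕ} (h : E d → ℝ) :
    Wfun d h = ∫ x, h x * ∫ y, h y * ‖x - y‖ ^ (-((d:ℝ) - 2)) := by
  rw [Wfun]
  refine integral_congr_ae (Filter.Eventually.of_forall fun x => ?_)
  dsimp only
  rw [← integral_const_mul]
  refine integral_congr_ae (Filter.Eventually.of_forall fun y => ?_)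
  ring

lemma Wfun_const_mul {d : ℕ} (h : E d → ℝ) (c : ℝ) :
    Wfun d (fun x => c * h x) = c^2 * Wfun d h := by
  rw [Wfun, Wfun, ← integral_const_mul]
  refine integral_congr_ae (Filter.Eventually.of_forall fun x => ?_)
  dsimp only
  rw [← integral_const_mul]
  refine integral_congr_ae (Filter.Eventually.of_forall fun y => ?_)
  ring

lemma ntE {d : ℕ} (hd : 3 ≤ d) : Nontrivial (E d) := by
  have : 0 < finrank ℝ (E d) := by rw [finrank_euclideanSpace_fin]; omega
  exact Module.nontrivial_of_finrank_pos this

lemma riesz_integrableOn {d : ℕ} (hd : 3 ≤ d) {R : ℝ} (hR : 0 < R) :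
    IntegrableOn (fun z : E d => ‖z‖ ^ (-((d:ℝ) - 2))) (ball (0:E d) R) volume := by
  have := ntE hd
  have hd3 := dR3 hd
  set α : ℝ := (d:ℝ) - 2 with hα
  have hα0 : 0 < α := by rw [hα]; linarith
  have hmeas : Measurable (fun z : E d => ‖z‖ ^ (-α)) := by fun_prop
  refine ⟨hmeas.aestronglyMeasurable.restrict, ?_⟩
  rw [hasFiniteIntegral_iff_ofReal
    (Filter.Eventually.of_forall fun z => Real.rpow_nonneg (norm_nonneg _) _)]
  set f : E d → ℝ≥0∞ := fun z => ENNReal.ofReal (‖z‖ ^ (-α)) with hf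
  set S : ℕ → Set (E d) := fun n => ball 0 (R * (1/2)^n) \ ball 0 (R * (1/2)^(n+1)) with hS
  have hcover : ball (0:E d) R ⊆ {0} ∪ ⋃ n, S n := by
    intro z hz
    rcases eq_or_ne z 0 with rfl | hz0
    · exact Or.inl rfl
    refine Or.inr ?_
    have hz0' : 0 < ‖z‖ := norm_pos_iff.mpr hz0
    have hzR : ‖z‖ < R := mem_ball_zero_iff.mp hz
    have hex : ∃ n : ℕ, R * (1/2:ℝ)^(n+1) ≤ ‖z‖ := by
      obtain ⟨n, hn⟩ := exists_pow_lt_of_lt_one (div_pos hz0' hR) (by norm_num : (1/2:ℝ) < 1)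
      refine ⟨n, ?_⟩
      have h1 : ((1:ℝ)/2)^(n+1) ≤ (1/2:ℝ)^n :=
        pow_le_pow_of_le_one (by norm_num) (by norm_num) (by omega)
      have h2 : R * (1/2:ℝ)^n < ‖z‖ := by
        rw [mul_comm, ← lt_div_iff₀ hR]; exact hn
      nlinarith
    classical
    set N := Nat.find hex with hN
    have hlow : R * (1/2:ℝ)^(N+1) ≤ ‖z‖ := Nat.find_spec hex
    have hupp : ‖z‖ < R * (1/2:ℝ)^N := by
      rcases Nat.eq_zero_or_pos N with h0 | h0
      · rw [h0]; simpa using hzR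
      · obtain ⟨k, hk⟩ := Nat.exists_eq_succ_of_ne_zero h0.ne'
        have hmin := Nat.find_min hex (by omega : k < N)
        rw [hk]
        exact lt_of_not_ge hmin
    refine mem_iUnion.mpr ⟨N, mem_ball_zero_iff.mpr hupp, fun hc => ?_⟩
    exact absurd (mem_ball_zero_iff.mp hc) (not_lt.mpr hlow)
  have hterm : ∀ n : ℕ, ∫⁻ z in S n, f z ≤
      ENNReal.ofReal (2^α * R^2) * ENNReal.ofReal ((1/4:ℝ)^n) * volume (ball (0:E d) 1) := by
    intro n
    have hrn : 0 < R * (1/2:ℝ)^n := by positivity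
    have hrn1 : 0 < R * (1/2:ℝ)^(n+1) := by positivity
    have hSm : MeasurableSet (S n) := measurableSet_ball.diff measurableSet_ball
    have hb : ∀ z ∈ S n, f z ≤ ENNReal.ofReal ((R * (1/2:ℝ)^(n+1)) ^ (-α)) := by
      intro z hz
      have h1 : R * (1/2:ℝ)^(n+1) ≤ ‖z‖ :=
        le_of_not_gt (fun hc => hz.2 (mem_ball_zero_iff.mpr hc))
      exact ENNReal.ofReal_le_ofReal (Real.rpow_le_rpow_of_nonpos hrn1 h1 (by linarith))
    have hreal : (R * (1/2:ℝ)^(n+1)) ^ (-α) * (R * (1/2:ℝ)^n)^(d:ℕ)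
        = 2^α * R^2 * (1/4:ℝ)^n := by
      have hsplit : R * (1/2:ℝ)^(n+1) = (R * (1/2:ℝ)^n) * (1/2) := by rw [pow_succ]; ring
      rw [hsplit, Real.mul_rpow hrn.le (by norm_num), ← Real.rpow_natCast (R * (1/2:ℝ)^n) d]
      have hhalf : ((1:ℝ)/2) ^ (-α) = 2^α := by
        rw [one_div, Real.inv_rpow (by norm_num : (0:ℝ) ≤ 2),
          ← Real.rpow_neg (by norm_num : (0:ℝ) ≤ 2), neg_neg]
      have hcollect : (R * (1/2:ℝ)^n) ^ (-α) * (R * (1/2:ℝ)^n) ^ ((d:ℕ):ℝ)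
          = (R * (1/2:ℝ)^n) ^ (2:ℝ) := by
        rw [← Real.rpow_add hrn]
        congr 1
        rw [hα]
        push_cast
        ring
      calc (R * (1/2:ℝ)^n) ^ (-α) * (1/2:ℝ) ^ (-α) * (R * (1/2:ℝ)^n) ^ ((d:ℕ):ℝ)
          = (1/2:ℝ) ^ (-α) * ((R * (1/2:ℝ)^n) ^ (-α) * (R * (1/2:ℝ)^n) ^ ((d:ℕ):ℝ)) := by ring
        _ = 2^α * (R * (1/2:ℝ)^n) ^ (2:ℝ) := by rw [hhalf, hcollect]
        _ = 2^α * (R * (1/2:ℝ)^n) ^ (2:ℕ) := by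
            rw [← Real.rpow_natCast (R * (1/2:ℝ)^n) 2]; norm_num
        _ = 2^α * R^2 * (1/4:ℝ)^n := by
            have : ((1/2:ℝ)^n)^2 = (1/4:ℝ)^n := by
              rw [← pow_mul, mul_comm, pow_mul]; norm_num
            rw [mul_pow]; rw [this]; ring
    calc ∫⁻ z in S n, f z
        ≤ ∫⁻ _ in S n, ENNReal.ofReal ((R * (1/2:ℝ)^(n+1)) ^ (-α)) ∂volume :=
          setLIntegral_mono' hSm hb
      _ = ENNReal.ofReal ((R * (1/2:ℝ)^(n+1)) ^ (-α)) * volume (S n) := setLIntegral_const _ _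
      _ ≤ ENNReal.ofReal ((R * (1/2:ℝ)^(n+1)) ^ (-α)) *
            volume (ball (0:E d) (R * (1/2:ℝ)^n)) := by
          gcongr
          exact diff_subset
      _ = ENNReal.ofReal (2^α * R^2) * ENNReal.ofReal ((1/4:ℝ)^n) * volume (ball (0:E d) 1) := by
          rw [Measure.addHaar_ball _ _ hrn.le, finrank_euclideanSpace_fin, ← mul_assoc,
            ← ENNReal.ofReal_mul (Real.rpow_nonneg hrn1.le _), hreal,
            ENNReal.ofReal_mul (by positivity)]
  have hsum : ∑' n : ℕ, (ENNReal.ofReal (2^α * R^2) * ENNReal.ofReal ((1/4:ℝ)^n) *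
      volume (ball (0:E d) 1)) < ⊤ := by
    have h14 : ∀ n:ℕ, ENNReal.ofReal ((1/4:ℝ)^n) = (ENNReal.ofReal (1/4))^n := fun n => by
      rw [← ENNReal.ofReal_pow (by norm_num)]
    simp_rw [h14]
    rw [ENNReal.tsum_mul_right, ENNReal.tsum_mul_left, ENNReal.tsum_geometric]
    refine ENNReal.mul_lt_top (ENNReal.mul_lt_top ENNReal.ofReal_lt_top ?_) measure_ball_lt_top
    rw [ENNReal.inv_lt_top]
    rw [tsub_pos_iff_lt]
    exact ENNReal.ofReal_lt_one.mpr (by norm_num)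
  calc ∫⁻ z in ball (0:E d) R, f z
      ≤ ∫⁻ z in ({0} ∪ ⋃ n, S n : Set (E d)), f z := lintegral_mono_set hcover
    _ ≤ (∫⁻ z in ({0}: Set (E d)), f z) + ∫⁻ z in ⋃ n, S n, f z := lintegral_union_le _ _ _
    _ = ∫⁻ z in ⋃ n, S n, f z := by
        rw [setLIntegral_measure_zero _ _ (measure_singleton _), zero_add]
    _ ≤ ∑' n, ∫⁻ z in S n, f z := lintegral_iUnion_le _ _
    _ ≤ ∑' n : ℕ, (ENNReal.ofReal (2^α * R^2) * ENNReal.ofReal ((1/4:ℝ)^n) *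
        volume (ball (0:E d) 1)) := ENNReal.tsum_le_tsum hterm
    _ < ⊤ := hsum

lemma kernel_indicator_eq {d : ℕ} (x : E d) (R : ℝ) :
    ((ball x R).indicator fun y : E d => ‖x - y‖ ^ (-((d:ℝ) - 2)))
      = fun y => (ball (0:E d) R).indicator (fun z => ‖z‖ ^ (-((d:ℝ) - 2))) (x - y) := by
  funext y
  have hiff : x - y ∈ ball (0:E d) R ↔ y ∈ ball x R := by
    rw [mem_ball_zero_iff, ← dist_eq_norm, mem_ball']
  by_cases hy : y ∈ ball x R
  · rw [indicator_of_mem hy, indicator_of_mem (hiff.mpr hy)]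
  · rw [indicator_of_notMem hy, indicator_of_notMem (fun hc => hy (hiff.mp hc))]

lemma kernel_integrableOn {d : ℕ} (hd : 3 ≤ d) (x : E d) {R : ℝ} (hR : 0 < R) :
    IntegrableOn (fun y : E d => ‖x - y‖ ^ (-((d:ℝ) - 2))) (ball x R) volume := by
  have base := riesz_integrableOn hd hR
  rw [← integrable_indicator_iff measurableSet_ball] at base ⊢
  rw [kernel_indicator_eq]
  exact base.comp_sub_left x

lemma kernel_setIntegral_eq {d : ℕ} (x : E d) (R : ℝ) :
    (∫ y in ball x R, ‖x - y‖ ^ (-((d:ℝ) - 2))) = ∫ z in ball (0:E d) R, ‖z‖ ^ (-((d:ℝ) - 2)) := by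
  rw [← integral_indicator measurableSet_ball, ← integral_indicator measurableSet_ball,
    kernel_indicator_eq]
  exact integral_sub_left_eq_self _ volume x

lemma indicator_one_mem {d : ℕ} (hd : 3 ≤ d) :
    InL1Lm d ((ball (0:E d) 1).indicator fun _ => (1:ℝ)) := by
  refine ⟨memLp_indicator_const 1 measurableSet_ball 1 (Or.inr measure_ball_lt_top.ne),
    memLp_indicator_const _ measurableSet_ball 1 (Or.inr measure_ball_lt_top.ne),
    Filter.Eventually.of_forall fun x => indicator_nonneg (fun _ _ => zero_le_one) x⟩

lemma indicator_one_ne {d : ℕ} (hd : 3 ≤ d) :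
    ¬ (((ball (0:E d) 1).indicator fun _ => (1:ℝ)) =ᵐ[volume] 0) := by
  have := ntE hd
  intro hcon
  rw [indicator_ae_eq_zero] at hcon
  have h0 : volume (ball (0:E d) 1) ≠ 0 := (measure_ball_pos _ _ one_pos).ne'
  apply h0
  simpa [Function.support_const one_ne_zero] using hcon

lemma I_strongly_measurable {d : ℕ} (hd : 3 ≤ d) :
    StronglyMeasurable (fun x : E d => ∫ y in ball (0:E d) 1, ‖x - y‖ ^ (-((d:ℝ) - 2))) := by
  have hF : StronglyMeasurable (fun p : E d × E d =>
      (univ ×ˢ ball (0:E d) 1).indicator (fun q : E d × E d => ‖q.1 - q.2‖ ^ (-((d:ℝ) - 2))) p) := by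
    refine Measurable.stronglyMeasurable ?_
    refine Measurable.indicator ?_ (MeasurableSet.prod MeasurableSet.univ measurableSet_ball)
    fun_prop
  have := hF.integral_prod_right' (ν := volume)
  have heq : (fun x : E d => ∫ y in ball (0:E d) 1, ‖x - y‖ ^ (-((d:ℝ) - 2)))
      = fun x : E d => ∫ y, (univ ×ˢ ball (0:E d) 1).indicator
          (fun q : E d × E d => ‖q.1 - q.2‖ ^ (-((d:ℝ) - 2))) (x, y) := by
    funext x
    rw [← integral_indicator measurableSet_ball]
    congr 1
    funext y
    by_cases hy : y ∈ ball (0:E d) 1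
    · rw [indicator_of_mem hy, indicator_of_mem (by simp [hy])]
    · rw [indicator_of_notMem hy, indicator_of_notMem (by simp [hy])]
  rw [heq]
  exact this

lemma Wfun_indicator_pos {d : ℕ} (hd : 3 ≤ d) :
    0 < Wfun d ((ball (0:E d) 1).indicator fun _ => (1:ℝ)) := by
  have := ntE hd
  have hd3 := dR3 hd
  have hα0 : 0 < (d:ℝ) - 2 := by linarith
  set α : ℝ := (d:ℝ) - 2 with hα
  set h1 : E d → ℝ := (ball (0:E d) 1).indicator (fun _ => (1:ℝ)) with hh1
  set I : E d → ℝ := fun x => ∫ y in ball (0:E d) 1, ‖x - y‖ ^ (-α) with hIdef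
  set C : ℝ := ∫ z in ball (0:E d) 2, ‖z‖ ^ (-α) with hCdef
  have hker : ∀ x : E d, (fun y => h1 y * ‖x - y‖ ^ (-α))
      = (ball (0:E d) 1).indicator (fun y => ‖x - y‖ ^ (-α)) := by
    intro x; funext y
    rw [hh1]
    by_cases hy : y ∈ ball (0:E d) 1 <;> simp [indicator, hy]
  have hinner : ∀ x, (∫ y, h1 x * h1 y * ‖x - y‖ ^ (-α)) = h1 x * I x := by
    intro x
    have hre : (fun y => h1 x * h1 y * ‖x - y‖ ^ (-α))
        = fun y => h1 x * (h1 y * ‖x - y‖ ^ (-α)) := by funext y; ring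
    rw [hre, integral_const_mul, hker x, integral_indicator measurableSet_ball]
  have hW : Wfun d h1 = ∫ x, h1 x * I x := by
    rw [Wfun]
    refine integral_congr_ae (Filter.Eventually.of_forall fun x => ?_)
    dsimp only
    exact hinner x
  have hInonneg : ∀ x, 0 ≤ I x := fun x =>
    setIntegral_nonneg measurableSet_ball fun y _ => Real.rpow_nonneg (norm_nonneg _) _
  have hsub : ∀ x ∈ ball (0:E d) 1, ball (0:E d) 1 ⊆ ball x 2 := by
    intro x hx y hy
    rw [mem_ball] at *
    have h1 := dist_triangle y 0 x
    rw [dist_comm (0:E d) x] at h1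
    linarith
  have hIle : ∀ x ∈ ball (0:E d) 1, I x ≤ C := by
    intro x hx
    have hint2 : IntegrableOn (fun y : E d => ‖x - y‖ ^ (-α)) (ball x 2) volume :=
      kernel_integrableOn hd x two_pos
    have hmono : I x ≤ ∫ y in ball x 2, ‖x - y‖ ^ (-α) := by
      refine setIntegral_mono_set hint2
        (Filter.Eventually.of_forall fun y => Real.rpow_nonneg (norm_nonneg _) _)
        (HasSubset.Subset.eventuallyLE (hsub x hx))
    rw [kernel_setIntegral_eq x 2] at hmono
    exact hmono
  have hIpos : ∀ x ∈ ball (0:E d) 1, 0 < I x := by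
    intro x hx
    have hint1 : IntegrableOn (fun y : E d => ‖x - y‖ ^ (-α)) (ball (0:E d) 1) volume :=
      (kernel_integrableOn hd x two_pos).mono_set (hsub x hx)
    rw [hIdef]
    rw [setIntegral_pos_iff_support_of_nonneg_ae
      (Filter.Eventually.of_forall fun y => Real.rpow_nonneg (norm_nonneg _) _) hint1]
    have hss : ball (0:E d) 1 \ {x} ⊆ Function.support (fun y : E d => ‖x - y‖ ^ (-α)) ∩ ball (0:E d) 1 := by
      rintro y ⟨hy, hyx⟩
      refine ⟨?_, hy⟩
      have hxy : x - y ≠ 0 := sub_ne_zero.mpr (fun hc => hyx (by simp [hc.symm]))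
      have : (0:ℝ) < ‖x - y‖ ^ (-α) := Real.rpow_pos_of_pos (norm_pos_iff.mpr hxy) _
      exact fun hc => this.ne' hc
    calc (0:ℝ≥0∞) < volume (ball (0:E d) 1 \ {x}) := by
          rw [measure_diff_null (measure_singleton x)]
          exact measure_ball_pos _ _ one_pos
      _ ≤ volume (Function.support (fun y : E d => ‖x - y‖ ^ (-α)) ∩ ball (0:E d) 1) :=
          measure_mono hss
  have hprod : (fun x => h1 x * I x) = (ball (0:E d) 1).indicator I := by
    funext x
    rw [hh1]
    by_cases hx : x ∈ ball (0:E d) 1 <;> simp [indicator, hx]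
  have hIint : IntegrableOn I (ball (0:E d) 1) volume := by
    refine Measure.integrableOn_of_bounded measure_ball_lt_top.ne
      ((I_strongly_measurable hd).aestronglyMeasurable) (M := C) ?_
    filter_upwards [ae_restrict_mem measurableSet_ball] with x hx
    rw [Real.norm_of_nonneg (hInonneg x)]
    exact hIle x hx
  have hWpos : 0 < ∫ x in ball (0:E d) 1, I x := by
    rw [setIntegral_pos_iff_support_of_nonneg_ae
      (Filter.Eventually.of_forall fun x => hInonneg x) hIint]
    have hss : ball (0:E d) 1 ⊆ Function.support I ∩ ball (0:E d) 1 := fun x hx =>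
      ⟨fun hc => (hIpos x hx).ne' hc, hx⟩
    calc (0:ℝ≥0∞) < volume (ball (0:E d) 1) := measure_ball_pos _ _ one_pos
      _ ≤ volume (Function.support I ∩ ball (0:E d) 1) := measure_mono hss
  rw [hW, hprod, integral_indicator measurableSet_ball]
  exact hWpos

def Sset (d : ℕ) : Set ℝ :=
  { r : ℝ | ∃ h : E d → ℝ, InL1Lm d h ∧ ¬ (h =ᵐ[volume] 0) ∧
    r = Wfun d h / (nrm d 1 h ^ (2 / (d : ℝ)) * nrm d (mexp d) h ^ mexp d) }

lemma Cstar_eq (d : ℕ) : Cstar d = sSup (Sset d) := rfl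

lemma Sset_nonempty_pos {d : ℕ} (hd : 3 ≤ d) : ∃ r ∈ Sset d, 0 < r := by
  set h1 : E d → ℝ := (ball (0:E d) 1).indicator (fun _ => (1:ℝ)) with hh1
  have hmem := indicator_one_mem hd
  have hne := indicator_one_ne hd
  refine ⟨_, ⟨h1, hmem, hne, rfl⟩, ?_⟩
  have hN1 : 0 < nrm d 1 h1 :=
    nrm_pos one_pos (by rw [ENNReal.ofReal_one]; exact hmem.1) hne
  have hNm : 0 < nrm d (mexp d) h1 :=
    nrm_pos (by linarith [one_lt_mexp hd]) hmem.2.1 hne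
  have hW := Wfun_indicator_pos hd
  have hp1 : 0 < nrm d 1 h1 ^ (2/(d:ℝ)) := Real.rpow_pos_of_pos hN1 _
  have hp2 : 0 < nrm d (mexp d) h1 ^ mexp d := Real.rpow_pos_of_pos hNm _
  exact div_pos hW (mul_pos hp1 hp2)

lemma exists_candidate {d : ℕ} (hd : 3 ≤ d) {M : ℝ} (hM : Mc d < M) :
    0 < M ∧ ∃ h : E d → ℝ, InL1Lm d h ∧ ¬ (h =ᵐ[volume] 0) ∧
      2 / ((mexp d - 1) * cD d * M ^ (2/(d:ℝ))) <
        Wfun d h / (nrm d 1 h ^ (2/(d:ℝ)) * nrm d (mexp d) h ^ mexp d) := by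
  obtain ⟨r₀, hr₀mem, hr₀pos⟩ := Sset_nonempty_pos hd
  have hm1 := msub_pos hd
  have hcd := cD_pos hd
  have hdpos := dRpos hd
  by_cases hbdd : BddAbove (Sset d)
  · have hCge : r₀ ≤ Cstar d := by rw [Cstar_eq]; exact le_csSup hbdd hr₀mem
    have hCpos : 0 < Cstar d := lt_of_lt_of_le hr₀pos hCge
    have hBpos : 0 < 2 / ((mexp d - 1) * Cstar d * cD d) := by positivity
    have hMpos : 0 < M := lt_of_le_of_lt (Real.rpow_nonneg hBpos.le _) hM
    have h2d : 0 < 2/(d:ℝ) := by positivity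
    have key : 2 / ((mexp d - 1) * Cstar d * cD d) < M ^ (2/(d:ℝ)) := by
      have h0 := Real.rpow_lt_rpow (Real.rpow_nonneg hBpos.le ((d:ℝ)/2)) hM h2d
      rw [← Real.rpow_mul hBpos.le] at h0
      have hexp : (d:ℝ)/2 * (2/(d:ℝ)) = 1 := by field_simp
      rwa [hexp, Real.rpow_one] at h0
    have hMr : 0 < M ^ (2/(d:ℝ)) := Real.rpow_pos_of_pos hMpos _
    have ht : 2 / ((mexp d - 1) * cD d * M ^ (2/(d:ℝ))) < Cstar d := by
      rw [div_lt_iff₀ (by positivity)] at key ⊢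
      nlinarith [key]
    obtain ⟨r, hrmem, hrlt⟩ :=
      exists_lt_of_lt_csSup ⟨r₀, hr₀mem⟩ (by rw [← Cstar_eq]; exact ht)
    obtain ⟨h, hh1, hh2, rfl⟩ := hrmem
    exact ⟨hMpos, h, hh1, hh2, hrlt⟩
  · have hCeq : Cstar d = 0 := by rw [Cstar_eq]; exact Real.sSup_of_not_bddAbove hbdd
    have hMc0 : Mc d = 0 := by
      rw [Mc, hCeq]
      have : (mexp d - 1) * 0 * cD d = 0 := by ring
      rw [this, div_zero]
      exact Real.zero_rpow (by positivity)
    have hMpos : 0 < M := by rw [hMc0] at hM; exact hM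
    obtain ⟨r, hrmem, hrlt⟩ :=
      not_bddAbove_iff.mp hbdd (2 / ((mexp d - 1) * cD d * M ^ (2/(d:ℝ))))
    obtain ⟨h, hh1, hh2, rfl⟩ := hrmem
    exact ⟨hMpos, h, hh1, hh2, hrlt⟩

lemma exists_normalized {d : ℕ} (hd : 3 ≤ d) {M : ℝ} (hM : Mc d < M) :
    ∃ g : E d → ℝ, InL1Lm d g ∧ nrm d 1 g = M ∧
      (1 / (mexp d - 1)) * (∫ x, g x ^ mexp d) - (cD d / 2) * Wfun d g < 0 := by
  obtain ⟨hMpos, h, hmem, hne, hrat⟩ := exists_candidate hd hM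
  have hm1 := msub_pos hd
  have hcd := cD_pos hd
  have hdpos := dRpos hd
  have hmpos : 0 < mexp d := by linarith [one_lt_mexp hd]
  have hN1 : 0 < nrm d 1 h :=
    nrm_pos one_pos (by rw [ENNReal.ofReal_one]; exact hmem.1) hne
  have hNm : 0 < nrm d (mexp d) h := nrm_pos hmpos hmem.2.1 hne
  set c : ℝ := M / nrm d 1 h with hc
  have hcpos : 0 < c := div_pos hMpos hN1
  refine ⟨fun x => c * h x, ⟨hmem.1.const_mul c, hmem.2.1.const_mul c,
    hmem.2.2.mono fun x hx => mul_nonneg hcpos.le hx⟩, ?_, ?_⟩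
  · rw [nrm_const_mul h hcpos.le, hc, div_mul_cancel₀ _ hN1.ne']
  · have hgm : MemLp (fun x => c * h x) (ENNReal.ofReal (mexp d)) volume :=
      hmem.2.1.const_mul c
    have hgpos : (0:E d → ℝ) ≤ᵐ[volume] fun x => c * h x :=
      hmem.2.2.mono fun x hx => mul_nonneg hcpos.le hx
    have hint : (∫ x, (c * h x) ^ mexp d) = nrm d (mexp d) (fun x => c * h x) ^ mexp d :=
      (nrm_rpow_eq hmpos hgm hgpos).symm
    have hWg : Wfun d (fun x => c * h x) = c^2 * Wfun d h := Wfun_const_mul h c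
    have hnmg : nrm d (mexp d) (fun x => c * h x) = c * nrm d (mexp d) h :=
      nrm_const_mul h hcpos.le (mexp d)
    have hdenpos : 0 < nrm d 1 h ^ (2/(d:ℝ)) * nrm d (mexp d) h ^ mexp d := by
      have hp1 : 0 < nrm d 1 h ^ (2/(d:ℝ)) := Real.rpow_pos_of_pos hN1 _
      have hp2 : 0 < nrm d (mexp d) h ^ mexp d := Real.rpow_pos_of_pos hNm _
      exact mul_pos hp1 hp2
    rw [lt_div_iff₀ hdenpos] at hrat
    have hcN1 : c * nrm d 1 h = M := by rw [hc]; field_simp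
    have hc2 : c^2 = c ^ (2/(d:ℝ)) * c ^ mexp d := by
      rw [← Real.rpow_natCast c 2, ← Real.rpow_add hcpos]
      congr 1
      rw [mexp]
      field_simp
      ring
    have hMrw : M ^ (2/(d:ℝ)) = c ^ (2/(d:ℝ)) * nrm d 1 h ^ (2/(d:ℝ)) := by
      rw [← hcN1, Real.mul_rpow hcpos.le hN1.le]
    have hcm : (c * nrm d (mexp d) h) ^ mexp d = c ^ mexp d * nrm d (mexp d) h ^ mexp d :=
      Real.mul_rpow hcpos.le hNm.le
    have hfac : 0 < cD d / 2 * c^2 := by positivity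
    have hmul := mul_lt_mul_of_pos_left hrat hfac
    have heq : cD d / 2 * c^2 *
        (2 / ((mexp d - 1) * cD d * M ^ (2/(d:ℝ))) *
          (nrm d 1 h ^ (2/(d:ℝ)) * nrm d (mexp d) h ^ mexp d))
        = 1/(mexp d - 1) * (c ^ mexp d * nrm d (mexp d) h ^ mexp d) := by
      rw [hc2, hMrw]
      have h1 : nrm d 1 h ^ (2/(d:ℝ)) ≠ 0 := (Real.rpow_pos_of_pos hN1 _).ne'
      have h2 : c ^ (2/(d:ℝ)) ≠ 0 := (Real.rpow_pos_of_pos hcpos _).ne'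
      field_simp
    rw [heq] at hmul
    rw [hint, hnmg, hWg, hcm]
    nlinarith [hmul]

lemma qmp_smul {d : ℕ} {l : ℝ} (hl : l ≠ 0) :
    Measure.QuasiMeasurePreserving (fun x : E d => l • x) volume volume := by
  refine ⟨(measurable_const_smul l), ?_⟩
  rw [Measure.map_addHaar_smul volume hl]
  exact Measure.smul_absolutelyContinuous

lemma memLp_comp_smul {d : ℕ} {g : E d → ℝ} {p : ℝ≥0∞} (hp : p ≠ ⊤) (hg : MemLp g p volume)
    {l : ℝ} (hl : l ≠ 0) : MemLp (fun x : E d => g (l • x)) p volume := by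
  have hmap : Measure.map (fun x : E d => l • x) volume
      = ENNReal.ofReal |(l ^ finrank ℝ (E d))⁻¹| • volume :=
    Measure.map_addHaar_smul volume hl
  have haesm : AEStronglyMeasurable (fun x : E d => g (l • x)) volume :=
    hg.1.comp_quasiMeasurePreserving (qmp_smul hl)
  refine ⟨haesm, ?_⟩
  have hgm : AEStronglyMeasurable g (Measure.map (fun x : E d => l • x) volume) := by
    rw [hmap]
    exact hg.1.mono_ac Measure.smul_absolutelyContinuous
  have hkey := eLpNorm_map_measure (p := p) hgm (measurable_const_smul l).aemeasurable
  rw [hmap, eLpNorm_smul_measure_of_ne_top hp] at hkey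
  have : eLpNorm (fun x : E d => g (l • x)) p volume
      = ENNReal.ofReal |(l ^ finrank ℝ (E d))⁻¹| ^ (1 / p).toReal • eLpNorm g p volume :=
    hkey.symm
  rw [this, smul_eq_mul]
  exact ENNReal.mul_lt_top
    (ENNReal.rpow_lt_top_of_nonneg ENNReal.toReal_nonneg ENNReal.ofReal_ne_top) hg.2

lemma dilation_lemma {d : ℕ} (hd : 3 ≤ d) {g : E d → ℝ} (hg : InL1Lm d g) {l : ℝ} (hl : 0 < l) :
    InL1Lm d (fun x => l ^ (d:ℕ) * g (l • x)) ∧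
    nrm d 1 (fun x => l ^ (d:ℕ) * g (l • x)) = nrm d 1 g ∧
    Ffun d (fun x => l ^ (d:ℕ) * g (l • x)) = l ^ ((d:ℝ) - 2) * Ffun d g := by
  have hd3 := dR3 hd
  have hdpos := dRpos hd
  have hlne : l ≠ 0 := hl.ne'
  have hane : (l:ℝ) ^ (d:ℕ) ≠ 0 := pow_ne_zero _ hlne
  have hapos : (0:ℝ) < l ^ (d:ℕ) := pow_pos hl _
  set α : ℝ := (d:ℝ) - 2 with hα
  -- nonnegativity a.e.
  have hnullg : volume {x : E d | ¬ 0 ≤ g x} = 0 := by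
    have := hg.2.2
    rw [Filter.EventuallyLE, ae_iff] at this
    simpa using this
  have hcompnull : volume {x : E d | ¬ 0 ≤ g (l • x)} = 0 := (qmp_smul hlne).preimage_null hnullg
  have hcomppos : ∀ᵐ x ∂(volume : Measure (E d)), 0 ≤ g (l • x) := by
    rw [ae_iff]; simpa using hcompnull
  have hpos : 0 ≤ᵐ[volume] fun x => l ^ (d:ℕ) * g (l • x) := by
    filter_upwards [hcomppos] with x hx
    exact mul_nonneg hapos.le hx
  have hmem1 : MemLp (fun x => l ^ (d:ℕ) * g (l • x)) 1 volume :=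
    (memLp_comp_smul ENNReal.one_ne_top hg.1 hlne).const_mul _
  have hmemm : MemLp (fun x => l ^ (d:ℕ) * g (l • x)) (ENNReal.ofReal (mexp d)) volume :=
    (memLp_comp_smul ENNReal.ofReal_ne_top hg.2.1 hlne).const_mul _
  have hmem : InL1Lm d (fun x => l ^ (d:ℕ) * g (l • x)) := ⟨hmem1, hmemm, hpos⟩
  refine ⟨hmem, ?_, ?_⟩
  · -- mass preservation
    rw [nrm_one_eq hmem1 hpos, nrm_one_eq hg.1 hg.2.2, integral_const_mul,
      Measure.integral_comp_smul_of_nonneg volume g l (hR := hl.le),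
      finrank_euclideanSpace_fin, smul_eq_mul]
    field_simp
  · -- free-energy scaling
    -- (A) the m-integral
    have hintm : (∫ x, (l ^ (d:ℕ) * g (l • x)) ^ mexp d) = l ^ α * ∫ x, g x ^ mexp d := by
      have h1 : (∫ x, (l ^ (d:ℕ) * g (l • x)) ^ mexp d)
          = ∫ x, (l ^ (d:ℕ)) ^ mexp d * g (l • x) ^ mexp d := by
        refine integral_congr_ae ?_
        filter_upwards [hcomppos] with x hx
        rw [Real.mul_rpow hapos.le hx]
      rw [h1, integral_const_mul,
        Measure.integral_comp_smul_of_nonneg volume (fun y => g y ^ mexp d) l (hR := hl.le),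
        finrank_euclideanSpace_fin, smul_eq_mul, ← mul_assoc]
      congr 1
      -- coefficient identity
      rw [← Real.rpow_natCast l d, ← Real.rpow_mul hl.le, ← Real.rpow_neg hl.le,
        ← Real.rpow_add hl]
      congr 1
      rw [hα, mexp]
      field_simp
      ring
    -- (B) the W-term
    have hK : ∀ x y : E d, l ^ α * ‖l • x - l • y‖ ^ (-α) = ‖x - y‖ ^ (-α) := by
      intro x y
      rw [← smul_sub, norm_smul, Real.norm_of_nonneg hl.le,
        Real.mul_rpow hl.le (norm_nonneg _), ← mul_assoc, ← Real.rpow_add hl,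
        add_neg_cancel, Real.rpow_zero, one_mul]
    set J : E d → ℝ := fun xh => ∫ y, g y * ‖xh - y‖ ^ (-α) with hJ
    have hinner : ∀ x : E d,
        (∫ y, (l ^ (d:ℕ) * g (l • x)) * (l ^ (d:ℕ) * g (l • y)) * ‖x - y‖ ^ (-α))
          = ((l:ℝ) ^ (d:ℕ))⁻¹ * (((l ^ (d:ℕ))^2 * l ^ α * g (l • x)) * J (l • x)) := by
      intro x
      have h1 : (fun y : E d => (l ^ (d:ℕ) * g (l • x)) * (l ^ (d:ℕ) * g (l • y)) * ‖x - y‖ ^ (-α))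
          = fun y => ((l ^ (d:ℕ))^2 * l ^ α * g (l • x)) *
              (g (l • y) * ‖l • x - l • y‖ ^ (-α)) := by
        funext y
        rw [← hK x y]
        ring
      rw [h1, Measure.integral_comp_smul_of_nonneg volume
          (fun yh => ((l ^ (d:ℕ))^2 * l ^ α * g (l • x)) * (g yh * ‖l • x - yh‖ ^ (-α))) l
          (hR := hl.le),
        finrank_euclideanSpace_fin, smul_eq_mul, integral_const_mul]
    have hWg : Wfun d (fun x => l ^ (d:ℕ) * g (l • x)) = l ^ α * Wfun d g := by
      rw [Wfun, ← hα]
      have h2 : (∫ x : E d, ∫ y, (l ^ (d:ℕ) * g (l • x)) * (l ^ (d:ℕ) * g (l • y)) * ‖x - y‖ ^ (-α))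
          = ∫ x : E d, (((l:ℝ) ^ (d:ℕ))⁻¹ * ((l ^ (d:ℕ))^2 * l ^ α)) *
              (g (l • x) * J (l • x)) := by
        refine integral_congr_ae (Filter.Eventually.of_forall fun x => ?_)
        dsimp only
        rw [hinner x]
        ring
      rw [h2, integral_const_mul,
        Measure.integral_comp_smul_of_nonneg volume (fun xh => g xh * J xh) l (hR := hl.le),
        finrank_euclideanSpace_fin, smul_eq_mul, Wfun_eq_inner, ← hα]
      simp only [hJ]
      field_simp
    rw [Ffun, Ffun, hintm, hWg]
    ring

end FEaux

/-- For `M > M_c` the free energy is unbounded below on `𝒴_M`: `μ_M = -∞`. -/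
theorem freeEnergy_unbounded_below (d : ℕ) (hd : 3 ≤ d) (M : ℝ) (hM : Mc d < M) :
    ∀ A : ℝ, ∃ h ∈ YM d M, Ffun d h < A := by
  intro A
  obtain ⟨g, hgmem, hgM, hgK⟩ := FEaux.exists_normalized hd hM
  have hKneg : Ffun d g < 0 := hgK
  obtain ⟨n, hn⟩ := exists_nat_gt (A / Ffun d g)
  set l : ℝ := (n:ℝ) + 1 with hl
  have hn0 : (0:ℝ) ≤ (n:ℝ) := Nat.cast_nonneg n
  have hl1 : 1 ≤ l := by rw [hl]; linarith
  have hlgt : A / Ffun d g < l := by rw [hl]; linarith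
  have hlpos : 0 < l := by linarith
  obtain ⟨hmem, hnrm, hFf⟩ := FEaux.dilation_lemma hd hgmem hlpos
  refine ⟨fun x => l ^ (d:ℕ) * g (l • x), ⟨hmem, by rw [hnrm, hgM]⟩, ?_⟩
  rw [hFf]
  have h1 : l ≤ l ^ ((d:ℝ) - 2) := by
    calc l = l ^ (1:ℝ) := (Real.rpow_one l).symm
      _ ≤ l ^ ((d:ℝ)-2) := Real.rpow_le_rpow_of_exponent_le hl1 (by linarith [FEaux.dR3 hd])
  have h2 : l ^ ((d:ℝ)-2) * Ffun d g ≤ l * Ffun d g :=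
    mul_le_mul_of_nonpos_right h1 hKneg.le
  have h3 : l * Ffun d g < A := by
    have hmul := mul_lt_mul_of_neg_right hlgt hKneg
    rwa [div_mul_cancel₀ _ hKneg.ne] at hmul
  linarith
end
end

section
/- If 0 < M < M_c, then ℱ[h] > 0 for every h ∈ 𝒴_M; in particular the infimum μ_M = 0 of ℱ over 𝒴_M is not attained. -/
open MeasureTheory Real Metric Set

noncomputable section

-- auxiliary lemmas

lemma Wfun_nonneg (d : ℕ) {h : E d → ℝ} (hh : 0 ≤ᵐ[volume] h) : 0 ≤ Wfun d h := by
  apply integral_nonneg_of_ae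
  filter_upwards [hh] with x hx
  apply integral_nonneg_of_ae
  filter_upwards [hh] with y hy
  exact mul_nonneg (mul_nonneg hx hy) (Real.rpow_nonneg (norm_nonneg _) _)

lemma one_lt_mexp (d : ℕ) (hd : 3 ≤ d) : 1 < mexp d := by
  have hd3 : (3:ℝ) ≤ d := by exact_mod_cast hd
  have hd0 : (0:ℝ) < d := by linarith
  rw [mexp, lt_div_iff₀ hd0]
  linarith

lemma integral_rpow_eq (d : ℕ) {h : E d → ℝ} (hp0 : 0 < mexp d)
    (hh : 0 ≤ᵐ[volume] h) (hmeas : AEStronglyMeasurable h volume) :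
    ∫ x : E d, h x ^ mexp d = nrm d (mexp d) h ^ mexp d := by
  set p := mexp d with hp
  have h1 : ∫ x : E d, h x ^ p = (∫⁻ x : E d, ENNReal.ofReal (h x ^ p)).toReal := by
    apply integral_eq_lintegral_of_nonneg_ae
    · filter_upwards [hh] with x hx
      exact Real.rpow_nonneg hx p
    · exact (hmeas.aemeasurable.pow_const p).aestronglyMeasurable
  have h2 : ∫⁻ x : E d, ENNReal.ofReal (h x ^ p) = ∫⁻ x : E d, (‖h x‖₊ : ENNReal) ^ p := by
    apply lintegral_congr_ae
    filter_upwards [hh] with x hx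
    rw [← enorm_eq_nnnorm, Real.enorm_eq_ofReal hx, ENNReal.ofReal_rpow_of_nonneg hx hp0.le]
  have h3 : nrm d p h ^ p = (∫⁻ x : E d, (‖h x‖₊ : ENNReal) ^ p).toReal := by
    unfold nrm
    rw [eLpNorm_eq_lintegral_rpow_enorm_toReal (ENNReal.ofReal_pos.mpr hp0).ne' ENNReal.ofReal_ne_top,
      ENNReal.toReal_ofReal hp0.le, ENNReal.toReal_rpow, ← ENNReal.rpow_mul,
      one_div_mul_cancel hp0.ne', ENNReal.rpow_one]
    rfl
  rw [h1, h2, h3]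

lemma Mc_eq_zero (d : ℕ) (hd : 3 ≤ d) (hC : Cstar d = 0) : Mc d = 0 := by
  have hd0 : (0:ℝ) < d := by
    have : (3:ℝ) ≤ d := by exact_mod_cast hd
    linarith
  unfold Mc
  rw [hC, mul_zero, zero_mul, div_zero]
  exact Real.zero_rpow (by positivity)


lemma key_pos (d : ℕ) (hd : 3 ≤ d) (M : ℝ) (hM0 : 0 < M) (hM : M < Mc d) :
    ∀ h ∈ YM d M, 0 < Ffun d h := by
  have hd3 : (3:ℝ) ≤ d := by exact_mod_cast hd
  have hd0 : (0:ℝ) < d := by linarith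
  have hp1 : 1 < mexp d := one_lt_mexp d hd
  have hp0 : 0 < mexp d := by linarith
  have hpm1 : 0 < mexp d - 1 := by linarith
  have hcD : 0 < cD d := by
    have h1 : 0 < Real.pi ^ ((d:ℝ)/2) := Real.rpow_pos_of_pos Real.pi_pos _
    have h2 : 0 < Real.Gamma ((d:ℝ)/2) := Real.Gamma_pos_of_pos (by linarith)
    have h3 : (0:ℝ) < (d:ℝ) - 2 := by linarith
    have h4 : 0 < sigmaD d := by
      rw [sigmaD]; positivity
    rw [cD]; positivity
  intro h hh
  obtain ⟨⟨hL1, hLp, hposae⟩, hnrm⟩ := hh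
  have hmeas : AEStronglyMeasurable h volume := hL1.aestronglyMeasurable
  have hne : ¬ (h =ᵐ[volume] 0) := by
    intro h0
    have hz : nrm d 1 h = 0 := by
      rw [nrm, eLpNorm_congr_ae h0, eLpNorm_zero, ENNReal.toReal_zero]
    rw [hnrm] at hz
    linarith
  have hNpos : 0 < nrm d (mexp d) h := by
    rw [nrm]
    apply ENNReal.toReal_pos
    · intro h0
      exact hne ((eLpNorm_eq_zero_iff hmeas (ENNReal.ofReal_pos.mpr hp0).ne').mp h0)
    · exact hLp.2.ne
  have hNpos' : 0 < nrm d (mexp d) h ^ mexp d := Real.rpow_pos_of_pos hNpos _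
  have hIeq : ∫ x : E d, h x ^ mexp d = nrm d (mexp d) h ^ mexp d :=
    integral_rpow_eq d hp0 hposae hmeas
  have hW0 : 0 ≤ Wfun d h := Wfun_nonneg d hposae
  set N := nrm d (mexp d) h ^ mexp d with hN_def
  set D := M ^ (2/(d:ℝ)) * N with hD_def
  have hDpos : 0 < D := mul_pos (Real.rpow_pos_of_pos hM0 _) hNpos'
  set S := { r : ℝ | ∃ h : E d → ℝ, InL1Lm d h ∧ ¬ (h =ᵐ[volume] 0) ∧
    r = Wfun d h / (nrm d 1 h ^ (2 / (d : ℝ)) * nrm d (mexp d) h ^ mexp d) } with hS_def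
  have hCs : Cstar d = sSup S := rfl
  have hrS : Wfun d h / D ∈ S := by
    refine ⟨h, ⟨hL1, hLp, hposae⟩, hne, ?_⟩
    rw [hnrm]
  by_cases hbdd : BddAbove S
  · have hle : Wfun d h / D ≤ Cstar d := by rw [hCs]; exact le_csSup hbdd hrS
    have hC0 : 0 ≤ Cstar d := le_trans (div_nonneg hW0 hDpos.le) hle
    have hCpos : 0 < Cstar d := by
      rcases hC0.lt_or_eq with hc | hc
      · exact hc
      · exfalso
        have := Mc_eq_zero d hd hc.symm
        rw [this] at hM
        linarith
    have hWle : Wfun d h ≤ Cstar d * D := (div_le_iff₀ hDpos).mp hle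
    have hB : Mc d ^ (2/(d:ℝ)) = 2 / ((mexp d - 1) * Cstar d * cD d) := by
      have hB0 : (0:ℝ) ≤ 2 / ((mexp d - 1) * Cstar d * cD d) := by positivity
      rw [Mc, ← Real.rpow_mul hB0, show (d:ℝ)/2 * (2/(d:ℝ)) = 1 by field_simp, Real.rpow_one]
    have hMlt : M ^ (2/(d:ℝ)) < 2 / ((mexp d - 1) * Cstar d * cD d) := by
      rw [← hB]
      exact Real.rpow_lt_rpow hM0.le hM (by positivity)
    have hfinal : (cD d * Cstar d / 2) * M ^ (2/(d:ℝ)) < 1/(mexp d - 1) := by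
      have h2 : cD d * Cstar d / 2 * (2 / ((mexp d - 1) * Cstar d * cD d)) = 1/(mexp d - 1) := by
        field_simp
      have h3 := mul_lt_mul_of_pos_left hMlt (show (0:ℝ) < cD d * Cstar d / 2 by positivity)
      rw [h2] at h3
      exact h3
    rw [Ffun, hIeq]
    have hW2 : (cD d / 2) * Wfun d h ≤ (cD d / 2) * (Cstar d * D) :=
      mul_le_mul_of_nonneg_left hWle (by positivity)
    have h4 : (cD d / 2) * (Cstar d * D) = ((cD d * Cstar d / 2) * M ^ (2/(d:ℝ))) * N := by
      rw [hD_def]; ring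
    have h5 : (cD d / 2) * Wfun d h < (1/(mexp d - 1)) * N := by
      calc (cD d / 2) * Wfun d h ≤ ((cD d * Cstar d / 2) * M ^ (2/(d:ℝ))) * N := by
            rw [← h4]; exact hW2
        _ < (1/(mexp d - 1)) * N := mul_lt_mul_of_pos_right hfinal hNpos'
    linarith
  · exfalso
    have hc : Cstar d = 0 := by rw [hCs]; exact Real.sSup_of_not_bddAbove hbdd
    have := Mc_eq_zero d hd hc
    rw [this] at hM
    linarith


/-- For `0 < M < M_c`, `ℱ` is strictly positive on `𝒴_M`; in particular the infimum
`μ_M = 0` of `ℱ` over `𝒴_M` is not attained. -/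
theorem freeEnergy_pos_subcritical (d : ℕ) (hd : 3 ≤ d) (M : ℝ) (hM0 : 0 < M)
    (hM : M < Mc d) :
    (∀ h ∈ YM d M, 0 < Ffun d h) ∧
    ¬ ∃ h ∈ YM d M, IsGLB (Ffun d '' YM d M) (Ffun d h) := by
  have key := key_pos d hd M hM0 hM
  refine ⟨key, ?_⟩
  rintro ⟨h, hhYM, hglb⟩
  have hv : 0 < Ffun d h := key h hhYM
  have hd3 : (3:ℝ) ≤ d := by exact_mod_cast hd
  have hd0 : (0:ℝ) < d := by linarith
  have hp1 : 1 < mexp d := one_lt_mexp d hd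
  have hp0 : 0 < mexp d := by linarith
  have hpm1 : 0 < mexp d - 1 := by linarith
  have hcD : 0 < cD d := by
    have h1 : 0 < Real.pi ^ ((d:ℝ)/2) := Real.rpow_pos_of_pos Real.pi_pos _
    have h2 : 0 < Real.Gamma ((d:ℝ)/2) := Real.Gamma_pos_of_pos (by linarith)
    have h3 : (0:ℝ) < (d:ℝ) - 2 := by linarith
    have h4 : 0 < sigmaD d := by rw [sigmaD]; positivity
    rw [cD]; positivity
  set v := Ffun d h with hv_def
  have hT : 0 < M ^ mexp d / ((mexp d - 1) * v) := by positivity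
  set K : ℝ := max 1 ((M ^ mexp d / ((mexp d - 1) * v)) ^ (1/(mexp d - 1))) with hK_def
  have hK1 : (1:ℝ) ≤ K := le_max_left _ _
  set c : ℝ := (volume (ball (0:E d) 1)).toReal with hc_def
  have hc : 0 < c := ENNReal.toReal_pos (measure_ball_pos volume _ one_pos).ne' measure_ball_lt_top.ne
  set R : ℝ := max 1 ((K+1)/c) with hR_def
  have hR1 : 1 ≤ R := le_max_left _ _
  have hR0 : 0 < R := lt_of_lt_of_le one_pos hR1
  haveI : Nontrivial (E d) := by
    haveI : NeZero d := ⟨by omega⟩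
    infer_instance
  have hVval : volume (ball (0:E d) R) = ENNReal.ofReal (R ^ d) * volume (ball (0:E d) 1) := by
    have h5 := Measure.addHaar_ball (volume : Measure (E d)) (0:E d) hR0.le
    rwa [finrank_euclideanSpace_fin] at h5
  set V := (volume (ball (0:E d) R)).toReal with hV_def
  have hVeq : V = R ^ d * c := by
    rw [hV_def, hVval, ENNReal.toReal_mul, ENNReal.toReal_ofReal (by positivity)]
  have hVK : K < V := by
    have h1 : (K+1)/c ≤ R := le_max_right _ _
    have h2 : K + 1 ≤ R * c := (div_le_iff₀ hc).mp h1
    have h3 : R ≤ R ^ d := le_self_pow₀ hR1 (by omega)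
    nlinarith
  have hV1 : 1 < V := lt_of_le_of_lt hK1 hVK
  have hV0 : 0 < V := by linarith
  set a := M / V with ha_def
  have ha : 0 < a := div_pos hM0 hV0
  set g : E d → ℝ := (ball (0:E d) R).indicator (fun _ => a) with hg_def
  have hgmem : ∀ q : ENNReal, MemLp g q volume := fun q =>
    memLp_indicator_const q measurableSet_ball a (Or.inr measure_ball_lt_top.ne)
  have hg0 : ∀ x, 0 ≤ g x := fun x => Set.indicator_nonneg (fun _ _ => ha.le) x
  have hgnrm : nrm d 1 g = M := by
    rw [nrm, ENNReal.ofReal_one,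
      eLpNorm_indicator_const measurableSet_ball one_ne_zero ENNReal.one_ne_top]
    simp only [ENNReal.toReal_one, toReal_enorm, div_one, ENNReal.rpow_one, ENNReal.toReal_mul,
      ENNReal.coe_toReal, coe_nnnorm, Real.norm_of_nonneg ha.le, ← hV_def]
    rw [ha_def]
    field_simp
  have hgY : g ∈ YM d M := ⟨⟨hgmem 1, hgmem _, Filter.Eventually.of_forall hg0⟩, hgnrm⟩
  have hgint : ∫ x : E d, g x ^ mexp d = V * a ^ mexp d := by
    have heq : (fun x : E d => g x ^ mexp d) = (ball (0:E d) R).indicator (fun _ => a ^ mexp d) := by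
      funext x
      rw [hg_def]
      by_cases hx : x ∈ ball (0:E d) R
      · rw [Set.indicator_of_mem hx, Set.indicator_of_mem hx]
      · rw [Set.indicator_of_notMem hx, Set.indicator_of_notMem hx, Real.zero_rpow hp0.ne']
    rw [heq, integral_indicator_const _ measurableSet_ball, smul_eq_mul, measureReal_def, ← hV_def]
  have hWg : 0 ≤ Wfun d g := Wfun_nonneg d (Filter.Eventually.of_forall hg0)
  have hFg : Ffun d g ≤ (1/(mexp d - 1)) * (V * a ^ mexp d) := by
    rw [Ffun, hgint]
    have : 0 ≤ (cD d / 2) * Wfun d g := mul_nonneg (by positivity) hWg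
    linarith
  have hVa : V * a ^ mexp d = M ^ mexp d / V ^ (mexp d - 1) := by
    have hsplit : V ^ mexp d = V * V ^ (mexp d - 1) := by
      calc V ^ mexp d = V ^ (1 + (mexp d - 1)) := by ring_nf
        _ = V ^ (1:ℝ) * V ^ (mexp d - 1) := Real.rpow_add hV0 1 (mexp d - 1)
        _ = V * V ^ (mexp d - 1) := by rw [Real.rpow_one]
    rw [ha_def, Real.div_rpow hM0.le hV0.le, hsplit]
    have hVp : (0:ℝ) < V ^ (mexp d - 1) := Real.rpow_pos_of_pos hV0 _
    field_simp
  have hVbig : M ^ mexp d / V ^ (mexp d - 1) < (mexp d - 1) * v := by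
    have hKe : (M ^ mexp d / ((mexp d - 1) * v)) ^ (1/(mexp d - 1)) < V :=
      lt_of_le_of_lt (le_max_right _ _) hVK
    have hrec : (M ^ mexp d / ((mexp d - 1) * v)) =
        ((M ^ mexp d / ((mexp d - 1) * v)) ^ (1/(mexp d - 1))) ^ (mexp d - 1) := by
      rw [← Real.rpow_mul hT.le, one_div_mul_cancel hpm1.ne', Real.rpow_one]
    have h2 : M ^ mexp d / ((mexp d - 1) * v) < V ^ (mexp d - 1) := by
      rw [hrec]
      exact Real.rpow_lt_rpow (Real.rpow_nonneg hT.le _) hKe hpm1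
    have hVp : (0:ℝ) < V ^ (mexp d - 1) := Real.rpow_pos_of_pos hV0 _
    have h3 : M ^ mexp d < V ^ (mexp d - 1) * ((mexp d - 1) * v) := (div_lt_iff₀ (by positivity)).mp h2
    rw [div_lt_iff₀ hVp]
    nlinarith
  have hcontr : Ffun d g < v := by
    calc Ffun d g ≤ (1/(mexp d - 1)) * (V * a ^ mexp d) := hFg
      _ = (1/(mexp d - 1)) * (M ^ mexp d / V ^ (mexp d - 1)) := by rw [hVa]
      _ < (1/(mexp d - 1)) * ((mexp d - 1) * v) := by
          exact mul_lt_mul_of_pos_left hVbig (by positivity)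
      _ = v := by field_simp
  have hlb : v ≤ Ffun d g := hglb.1 (Set.mem_image_of_mem _ hgY)
  linarith
end
end

section
/- There is no constant K > 0 such that the reverse Hölder-type inequality ‖h‖_m^m ‖h‖₁^(2/d) ≤ K ‖h‖_{2d/(d+2)}² holds for all measurable h : ℝ^d → ℝ with h ≥ 0 a.e. and h ∈ L¹(ℝ^d) ∩ L^m(ℝ^d). (Indeed, for γ ∈ ((d+2)/d, d/m) the family b_δ(x) = (δ+|x|)^(−γ) 𝟙_{B(0,1)}(x), δ ∈ (0,1], is bounded in L¹ and in L^{2d/(d+2)} but unbounded in L^m.) -/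
open MeasureTheory Real Metric Set

noncomputable section

lemma nrm_two_ind (d : ℕ) {S T : Set (E d)} (hS : MeasurableSet S) (hT : MeasurableSet T)
    (hST : Disjoint S T) (hSf : volume S ≠ ⊤) (hTf : volume T ≠ ⊤)
    {p a b : ℝ} (hp : 0 < p) (ha : 0 ≤ a) (hb : 0 ≤ b) :
    nrm d p (S.indicator (fun _ => a) + T.indicator (fun _ => b)) =
      (a ^ p * (volume S).toReal + b ^ p * (volume T).toReal) ^ (1 / p) := by
  have hpe : (ENNReal.ofReal p) ≠ 0 := by
    simp [ENNReal.ofReal_eq_zero, not_le, hp]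
  have hptop : (ENNReal.ofReal p) ≠ ⊤ := ENNReal.ofReal_ne_top
  rw [nrm, eLpNorm_eq_lintegral_rpow_enorm_toReal hpe hptop, ENNReal.toReal_ofReal hp.le]
  simp only [enorm_eq_nnnorm]
  have hpt : ∀ x, ((‖(S.indicator (fun _ => a) + T.indicator (fun _ => b)) x‖₊ : ENNReal)) ^ p
      = S.indicator (fun _ => ENNReal.ofReal (a ^ p)) x
        + T.indicator (fun _ => ENNReal.ofReal (b ^ p)) x := by
    intro x
    by_cases hxS : x ∈ S
    · have hxT : x ∉ T := Set.disjoint_left.mp hST hxS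
      simp only [Pi.add_apply, Set.indicator_of_mem hxS, Set.indicator_of_notMem hxT, add_zero]
      rw [← ENNReal.ofReal_rpow_of_nonneg ha hp.le]
      congr 1
      simp only [Real.nnnorm_of_nonneg ha, ENNReal.ofReal]
      exact congrArg _ (Real.toNNReal_of_nonneg ha).symm
    · by_cases hxT : x ∈ T
      · simp only [Pi.add_apply, Set.indicator_of_mem hxT, Set.indicator_of_notMem hxS, zero_add]
        rw [← ENNReal.ofReal_rpow_of_nonneg hb hp.le]
        congr 1
        simp only [Real.nnnorm_of_nonneg hb, ENNReal.ofReal]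
        exact congrArg _ (Real.toNNReal_of_nonneg hb).symm
      · simp [Set.indicator_of_notMem hxS, Set.indicator_of_notMem hxT,
          ENNReal.zero_rpow_of_pos hp]
  rw [lintegral_congr hpt, lintegral_add_left (measurable_const.indicator hS),
    lintegral_indicator_const hS, lintegral_indicator_const hT, ← ENNReal.toReal_rpow]
  congr 1
  rw [ENNReal.toReal_add, ENNReal.toReal_mul, ENNReal.toReal_mul,
    ENNReal.toReal_ofReal (Real.rpow_nonneg ha p), ENNReal.toReal_ofReal (Real.rpow_nonneg hb p)]
  · exact ENNReal.mul_ne_top ENNReal.ofReal_ne_top hSf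
  · exact ENNReal.mul_ne_top ENNReal.ofReal_ne_top hTf

set_option maxHeartbeats 1000000 in
/-- There is no constant `K > 0` with `‖h‖ₘ^m ‖h‖₁^(2/d) ≤ K ‖h‖_{2d/(d+2)}²` for all
nonnegative `h ∈ L¹ ∩ Lᵐ`. -/
theorem no_reverse_holder (d : ℕ) (hd : 3 ≤ d) :
    ¬ ∃ K : ℝ, 0 < K ∧ ∀ h : E d → ℝ, InL1Lm d h →
      nrm d (mexp d) h ^ mexp d * nrm d 1 h ^ (2 / (d : ℝ)) ≤
        K * nrm d (2 * d / ((d : ℝ) + 2)) h ^ 2 := by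
  rintro ⟨K, hK, hineq⟩
  have hD : (3:ℝ) ≤ (d:ℝ) := by exact_mod_cast hd
  have hD0 : (0:ℝ) < d := by linarith
  have hdne : (d:ℝ) ≠ 0 := hD0.ne'
  have hD2 : (d:ℝ) + 2 ≠ 0 := by positivity
  haveI : Nonempty (Fin d) := ⟨⟨0, by omega⟩⟩
  set m : ℝ := mexp d with hmdef
  have hm : m = 2 * ((d:ℝ) - 1) / d := rfl
  have hm1 : 1 < m := by
    rw [hm, lt_div_iff₀ hD0]; nlinarith
  have hm0 : 0 < m := by linarith
  set q : ℝ := 2 * (d:ℝ) / ((d:ℝ) + 2) with hqdef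
  have hq0 : 0 < q := by positivity
  have hVball_pos := measure_ball_pos (volume) (0 : E d) one_pos
  have hVball_top : volume (Metric.ball (0:E d) 1) ≠ ⊤ := measure_ball_lt_top.ne
  set V : ℝ := (volume (Metric.ball (0:E d) 1)).toReal with hVdef
  have hV : 0 < V := ENNReal.toReal_pos hVball_pos.ne' hVball_top
  set β : ℝ := ((d:ℝ) - 2) / d with hbdef
  have hβ : 0 < β := by rw [hbdef]; exact div_pos (by linarith) hD0
  set C1 : ℝ := K * ((2*V) ^ (1/q)) ^ 2 / (V * (V/2) ^ (2/(d:ℝ))) with hC1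
  have hC1nonneg : 0 ≤ C1 := by rw [hC1]; positivity
  set r : ℝ := min (1/2) ((C1+1) ^ (-1/β)) with hrdef
  have ht0 : 0 < (C1+1) ^ (-1/β) := Real.rpow_pos_of_pos (by linarith) _
  have hr0 : 0 < r := lt_min (by norm_num) ht0
  have hr2 : r ≤ 1/2 := min_le_left _ _
  have hr1 : r ≤ 1 := hr2.trans (by norm_num)
  have hrd : r ^ d ≤ 1/2 := by
    calc r ^ d ≤ r ^ 1 := pow_le_pow_of_le_one hr0.le hr1 (by omega)
    _ = r := pow_one r
    _ ≤ 1/2 := hr2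
  have hrd0 : (0:ℝ) ≤ r ^ d := by positivity
  -- sets
  set T : Set (E d) := Metric.ball (0:E d) r with hTdef
  set S : Set (E d) := Metric.ball (0:E d) 1 \ T with hSdef
  have hTmeas : MeasurableSet T := measurableSet_ball
  have hSmeas : MeasurableSet S := measurableSet_ball.diff hTmeas
  have hTsub : T ⊆ Metric.ball (0:E d) 1 := Metric.ball_subset_ball hr1
  have hST : Disjoint S T := disjoint_sdiff_left
  have hvolT : volume T = ENNReal.ofReal (r ^ d) * volume (Metric.ball (0:E d) 1) := by
    rw [hTdef, Measure.addHaar_ball _ _ hr0.le, finrank_euclideanSpace_fin]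
  have hTf : volume T ≠ ⊤ := measure_ball_lt_top.ne
  have hSf : volume S ≠ ⊤ :=
    ((measure_mono (Set.diff_subset)).trans_lt measure_ball_lt_top).ne
  set VT : ℝ := (volume T).toReal with hVT
  set VS : ℝ := (volume S).toReal with hVS
  have hVTval : VT = r ^ d * V := by
    rw [hVT, hvolT, ENNReal.toReal_mul, ENNReal.toReal_ofReal hrd0, hVdef]
  have hvolS : volume S = volume (Metric.ball (0:E d) 1) - volume T :=
    measure_diff hTsub hTmeas.nullMeasurableSet hTf
  have hVSval : VS = V - r ^ d * V := by
    rw [hVS, hvolS, ENNReal.toReal_sub_of_le (measure_mono hTsub) hVball_top, ← hVTval, hVT, hVdef]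
  have hVT0 : (0:ℝ) ≤ VT := ENNReal.toReal_nonneg
  have hVS0 : (0:ℝ) ≤ VS := ENNReal.toReal_nonneg
  have hVSlb : V/2 ≤ VS := by rw [hVSval]; nlinarith
  have hVSub : VS ≤ V := by rw [hVSval]; nlinarith
  -- the test function
  set A : ℝ := r ^ (-(((d:ℝ)+2)/2)) with hAdef
  have hA0 : 0 < A := Real.rpow_pos_of_pos hr0 _
  set h : E d → ℝ := S.indicator (fun _ => (1:ℝ)) + T.indicator (fun _ => A) with hhdef
  have hmem : InL1Lm d h := by
    refine ⟨?_, ?_, ?_⟩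
    · exact (memLp_indicator_const 1 hSmeas (1:ℝ) (Or.inr hSf)).add
        (memLp_indicator_const 1 hTmeas A (Or.inr hTf))
    · exact (memLp_indicator_const (ENNReal.ofReal m) hSmeas (1:ℝ) (Or.inr hSf)).add
        (memLp_indicator_const (ENNReal.ofReal m) hTmeas A (Or.inr hTf))
    · refine Filter.Eventually.of_forall fun x => ?_
      simp only [Pi.zero_apply, hhdef, Pi.add_apply]
      exact add_nonneg (Set.indicator_nonneg (fun _ _ => zero_le_one) x)
        (Set.indicator_nonneg (fun _ _ => hA0.le) x)
  -- norm values
  have hn1 : nrm d 1 h = VS + A * VT := by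
    rw [hhdef, nrm_two_ind d hSmeas hTmeas hST hSf hTf one_pos zero_le_one hA0.le]
    norm_num [Real.one_rpow, Real.rpow_one, hVS, hVT]
  have hnm : nrm d m h = (VS + A ^ m * VT) ^ (1/m) := by
    rw [hhdef, nrm_two_ind d hSmeas hTmeas hST hSf hTf hm0 zero_le_one hA0.le,
      Real.one_rpow, one_mul]
  have hnq : nrm d q h = (VS + A ^ q * VT) ^ (1/q) := by
    rw [hhdef, nrm_two_ind d hSmeas hTmeas hST hSf hTf hq0 zero_le_one hA0.le,
      Real.one_rpow, one_mul]
  -- exponent computations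
  have hAq : A ^ q * VT = V := by
    rw [hVTval, hAdef, ← Real.rpow_natCast r d, ← Real.rpow_mul hr0.le, ← mul_assoc,
      ← Real.rpow_add hr0]
    have hz : (-(((d:ℝ)+2)/2)) * q + (d:ℝ) = 0 := by
      rw [hqdef]; field_simp; ring
    rw [hz, Real.rpow_zero, one_mul]
  have hAm : A ^ m * VT = r ^ (-β) * V := by
    rw [hVTval, hAdef, ← Real.rpow_natCast r d, ← Real.rpow_mul hr0.le, ← mul_assoc,
      ← Real.rpow_add hr0]
    have hz : (-(((d:ℝ)+2)/2)) * m + (d:ℝ) = -β := by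
      rw [hm, hbdef]; field_simp; ring
    rw [hz]
  have hXnn : (0:ℝ) ≤ VS + A ^ m * VT :=
    add_nonneg hVS0 (mul_nonneg (Real.rpow_nonneg hA0.le m) hVT0)
  have hnm_pow : nrm d m h ^ m = VS + A ^ m * VT := by
    rw [hnm, one_div, Real.rpow_inv_rpow hXnn hm0.ne']
  have hlb_m : r ^ (-β) * V ≤ nrm d m h ^ m := by
    rw [hnm_pow, hAm]; linarith
  have hn1_lb : V/2 ≤ nrm d 1 h := by
    rw [hn1]; nlinarith [mul_nonneg hA0.le hVT0]
  have hlb_1 : (V/2) ^ (2/(d:ℝ)) ≤ nrm d 1 h ^ (2/(d:ℝ)) :=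
    Real.rpow_le_rpow (by positivity) hn1_lb (by positivity)
  have hub_q : nrm d q h ≤ (2*V) ^ (1/q) := by
    rw [hnq]
    refine Real.rpow_le_rpow (add_nonneg hVS0 (by rw [hAq]; exact hV.le)) ?_ (by positivity)
    rw [hAq]; linarith
  have hub_q2 : nrm d q h ^ 2 ≤ ((2*V) ^ (1/q)) ^ 2 :=
    pow_le_pow_left₀ ENNReal.toReal_nonneg hub_q 2
  -- put it together
  have hmain := hineq h hmem
  have hLHS : (r ^ (-β) * V) * ((V/2) ^ (2/(d:ℝ))) ≤ nrm d m h ^ m * nrm d 1 h ^ (2/(d:ℝ)) :=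
    mul_le_mul hlb_m hlb_1 (by positivity) (le_trans (by positivity) hlb_m)
  have hRHS : K * nrm d q h ^ 2 ≤ K * ((2*V) ^ (1/q)) ^ 2 :=
    mul_le_mul_of_nonneg_left hub_q2 hK.le
  have hfinal : (r ^ (-β) * V) * ((V/2) ^ (2/(d:ℝ))) ≤ K * ((2*V) ^ (1/q)) ^ 2 :=
    le_trans hLHS (le_trans hmain hRHS)
  have hden : 0 < V * (V/2) ^ (2/(d:ℝ)) := by positivity
  have hrβ_le : r ^ (-β) ≤ C1 := by
    rw [hC1, le_div_iff₀ hden]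
    calc r ^ (-β) * (V * (V/2) ^ (2/(d:ℝ)))
        = (r ^ (-β) * V) * ((V/2) ^ (2/(d:ℝ))) := by ring
      _ ≤ K * ((2*V) ^ (1/q)) ^ 2 := hfinal
  have hge : C1 + 1 ≤ r ^ (-β) := by
    have h1 : r ≤ (C1+1) ^ (-1/β) := min_le_right _ _
    have h2 := Real.rpow_le_rpow_of_nonpos hr0 h1 (neg_nonpos.mpr hβ.le)
    calc C1 + 1 = ((C1+1) ^ (-1/β)) ^ (-β) := by
          rw [← Real.rpow_mul (by linarith : (0:ℝ) ≤ C1+1),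
            show (-1/β) * (-β) = 1 by field_simp, Real.rpow_one]
      _ ≤ r ^ (-β) := h2
  linarith
end
end
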